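/- Let X be an ℝ^p-valued random vector, Z an ℝ^r-valued random vector, and Y = (Y_1,…,Y_q) an ℝ^q-valued random vector with non-degenerate components, all defined on a common probability space. Then the permutation-invariant version T̄ satisfies the information gain inequality T̄(Y|X) ≤ T̄(Y|(X,Z)), with equality T̄(Y|X) = T̄(Y|(X,Z)) if and only if Y and Z are conditionally independent given X. -/

import Mathlib

open MeasureTheory ProbabilityTheory

/-- Azadkia–Chatterjee's rank correlation `ξ(Y | m)` of a real random variable `Y`
given a sub-σ-algebra `m`. -/
noncomputable def xiSigma {Ω : Type*} (m : MeasurableSpace Ω) [MeasurableSpace Ω]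
    (P : Measure Ω) (Y : Ω → ℝ) : ℝ :=
  (∫ y, variance (P[Set.indicator {ω | y ≤ Y ω} (fun _ => (1 : ℝ)) | m]) P ∂(P.map Y)) /
  (∫ y, variance (Set.indicator {ω | y ≤ Y ω} (fun _ => (1 : ℝ))) P ∂(P.map Y))

/-- Azadkia–Chatterjee's rank correlation `ξ(Y | X)`: conditioning on the σ-algebra
generated by the random vector `X`. -/
noncomputable def xi {Ω α : Type*} [MeasurableSpace Ω] [MeasurableSpace α]
    (P : Measure Ω) (Y : Ω → ℝ) (X : Ω → α) : ℝ :=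
  xiSigma (MeasurableSpace.comap X inferInstance) P Y

/-- The σ-algebra generated by the response variables with index `< i`,
i.e. by `(Y_1, …, Y_{i-1})`; for `i = 0` it is the trivial σ-algebra `⊥`,
so that `xiSigma (sigmaPast Y 0) P (Y 0) = ξ(Y_1 | ∅) = 0`. -/
def sigmaPast {Ω : Type*} {q : ℕ} (Y : Fin q → Ω → ℝ) (i : Fin q) :
    MeasurableSpace Ω :=
  ⨆ j : Fin q, ⨆ _ : j < i, MeasurableSpace.comap (Y j) inferInstance

/-- The extension `T(Y | X)` of Azadkia–Chatterjee's rank correlation to a vector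
`Y = (Y_1, …, Y_q)` of response variables, given the predictor vector `X`:
`T(Y|X) = 1 − (q − ∑_i ξ(Y_i | (X,Y_{i−1},…,Y_1))) / (q − ∑_i ξ(Y_i | (Y_{i−1},…,Y_1)))`. -/
noncomputable def T {Ω α : Type*} [MeasurableSpace Ω] [MeasurableSpace α]
    (P : Measure Ω) {q : ℕ} (Y : Fin q → Ω → ℝ) (X : Ω → α) : ℝ :=
  1 - ((q : ℝ) - ∑ i, xiSigma (MeasurableSpace.comap X inferInstance ⊔ sigmaPast Y i) P (Y i)) /
      ((q : ℝ) - ∑ i, xiSigma (sigmaPast Y i) P (Y i))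

/-- A real random variable is non-degenerate if it is not almost surely constant. -/
def Nondegenerate {Ω : Type*} [MeasurableSpace Ω] (P : Measure Ω) (Y : Ω → ℝ) : Prop :=
  ¬ ∃ c : ℝ, ∀ᵐ ω ∂P, Y ω = c

/-- The permutation-invariant version `T̄(Y|X) = (1/q!) ∑_{σ ∈ S_q} T(Y_σ | X)`. -/
noncomputable def Tbar {Ω α : Type*} [MeasurableSpace Ω] [MeasurableSpace α]
    (P : Measure Ω) {q : ℕ} (Y : Fin q → Ω → ℝ) (X : Ω → α) : ℝ :=
  (1 / (Nat.factorial q : ℝ)) * ∑ σ : Equiv.Perm (Fin q), T P (fun i => Y (σ i)) X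


open MeasurableSpace Set Filter

namespace AFproof
set_option linter.unusedSectionVars false

variable {Ω : Type*} {m m' mc mi mn mA mY mZ mp mU : MeasurableSpace Ω}
  {mΩ : MeasurableSpace Ω} {P : Measure Ω} [IsProbabilityMeasure P]

noncomputable def fI (W : Ω → ℝ) (y : ℝ) : Ω → ℝ :=
  Set.indicator {ω | y ≤ W ω} fun _ => (1 : ℝ)

lemma fI_one {W : Ω → ℝ} {y : ℝ} {ω : Ω} (h : y ≤ W ω) : fI W y ω = 1 :=
  Set.indicator_of_mem (show ω ∈ {ω | y ≤ W ω} from h) _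

lemma fI_zero {W : Ω → ℝ} {y : ℝ} {ω : Ω} (h : ¬ y ≤ W ω) : fI W y ω = 0 :=
  Set.indicator_of_notMem (show ω ∉ {ω | y ≤ W ω} from h) _

lemma fI_nonneg (W : Ω → ℝ) (y : ℝ) : 0 ≤ fI W y := fun ω => by
  simp only [fI, Set.indicator_apply]; split <;> norm_num

lemma fI_le_one (W : Ω → ℝ) (y : ℝ) : fI W y ≤ fun _ => 1 := fun ω => by
  simp only [fI, Set.indicator_apply]; split <;> norm_num

lemma fI_sq (W : Ω → ℝ) (y : ℝ) : (fun ω => (fI W y ω) ^ 2) = fI W y := by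
  funext ω; simp only [fI, Set.indicator_apply]; split <;> norm_num

lemma measurableSet_fI {W : Ω → ℝ} (hW : Measurable W) (y : ℝ) :
    MeasurableSet {ω | y ≤ W ω} := measurableSet_le measurable_const hW

lemma setOf_le_eq_preimage (W : Ω → ℝ) (y : ℝ) : {ω | y ≤ W ω} = W ⁻¹' (Set.Ici y) := rfl

lemma measurableSet_fI_comap (W : Ω → ℝ) (y : ℝ) :
    MeasurableSet[MeasurableSpace.comap W inferInstance] {ω | y ≤ W ω} :=
  ⟨Set.Ici y, measurableSet_Ici, rfl⟩

lemma fI_meas {W : Ω → ℝ} (hW : Measurable W) (y : ℝ) : Measurable (fI W y) :=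
  measurable_const.indicator (measurableSet_fI hW y)

lemma fI_int {W : Ω → ℝ} (hW : Measurable W) (y : ℝ) : Integrable (fI W y) P :=
  (integrable_const (1 : ℝ)).indicator (measurableSet_fI hW y)

section bounded

variable {f : Ω → ℝ}

/-- a.e. bound for the conditional expectation of a `[0,1]`-valued function. -/
lemma condexp_bound01 (hm : m ≤ mΩ) (hfi : Integrable f P)
    (h0 : 0 ≤ f) (h1 : f ≤ fun _ => 1) :
    ∀ᵐ ω ∂P, 0 ≤ (P[f|m]) ω ∧ (P[f|m]) ω ≤ 1 := by
  have hle : P[f|m] ≤ᵐ[P] P[fun _ => (1:ℝ)|m] :=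
    condExp_mono hfi (integrable_const 1) (Eventually.of_forall h1)
  rw [condExp_const hm] at hle
  have hnn : (0 : Ω → ℝ) ≤ᵐ[P] P[f|m] := condExp_nonneg (Eventually.of_forall h0)
  filter_upwards [hnn, hle] with ω h₁ h₂
  exact ⟨h₁, h₂⟩

lemma abs_condexp_le01 (hm : m ≤ mΩ) (hfi : Integrable f P)
    (h0 : 0 ≤ f) (h1 : f ≤ fun _ => 1) :
    ∀ᵐ ω ∂P, ‖(P[f|m]) ω‖ ≤ 1 := by
  filter_upwards [condexp_bound01 hm hfi h0 h1] with ω h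
  rw [Real.norm_eq_abs, abs_le]; exact ⟨by linarith [h.1], h.2⟩

lemma memℒ2_condexp01 (hm : m ≤ mΩ) (hfi : Integrable f P)
    (h0 : 0 ≤ f) (h1 : f ≤ fun _ => 1) : MemLp (P[f|m]) 2 P :=
  MemLp.of_bound (stronglyMeasurable_condExp.mono hm).aestronglyMeasurable 1
    (abs_condexp_le01 hm hfi h0 h1)

/-- orthogonality: the inner product of two nested conditional expectations. -/
lemma key0 (h12 : m ≤ m') (h2 : m' ≤ mΩ)
    (hfi : Integrable f P) (h0 : 0 ≤ f) (h1 : f ≤ fun _ => 1) :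
    ∫ ω, (P[f|m]) ω * (P[f|m']) ω ∂P = ∫ ω, (P[f|m]) ω ^ 2 ∂P := by
  have h1m : m ≤ mΩ := h12.trans h2
  have hb1 : ∀ᵐ ω ∂P, ‖(P[f|m]) ω‖ ≤ 1 := abs_condexp_le01 h1m hfi h0 h1
  have hint12 : Integrable (P[f|m] * P[f|m']) P :=
    Integrable.bdd_mul (integrable_condExp) (stronglyMeasurable_condExp.mono h1m).aestronglyMeasurable hb1
  have hpull : P[P[f|m] * P[f|m']|m] =ᵐ[P] P[f|m] * P[P[f|m']|m] :=
    condExp_mul_of_stronglyMeasurable_left stronglyMeasurable_condExp hint12 integrable_condExp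
  have htow : P[P[f|m']|m] =ᵐ[P] P[f|m] := condExp_condExp_of_le h12 h2
  calc ∫ ω, (P[f|m]) ω * (P[f|m']) ω ∂P
      = ∫ ω, (P[f|m] * P[f|m']) ω ∂P := rfl
    _ = ∫ ω, (P[P[f|m] * P[f|m']|m]) ω ∂P := (integral_condExp h1m).symm
    _ = ∫ ω, ((P[f|m]) * P[P[f|m']|m]) ω ∂P := integral_congr_ae hpull
    _ = ∫ ω, (P[f|m]) ω ^ 2 ∂P := by
        refine integral_congr_ae (htow.mono fun ω h => ?_)
        simp only [Pi.mul_apply, h]; ring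

lemma sq_integrable_condexp (hm : m ≤ mΩ) (hfi : Integrable f P)
    (h0 : 0 ≤ f) (h1 : f ≤ fun _ => 1) :
    Integrable (fun ω => (P[f|m]) ω ^ 2) P := by
  have : (fun ω => (P[f|m]) ω ^ 2) = P[f|m] * P[f|m] := by funext ω; simp [sq]
  rw [this]
  exact Integrable.bdd_mul integrable_condExp
    (stronglyMeasurable_condExp.mono hm).aestronglyMeasurable (abs_condexp_le01 hm hfi h0 h1)

/-- Pythagoras for nested conditional expectations. -/
lemma key1 (h12 : m ≤ m') (h2 : m' ≤ mΩ)
    (hfi : Integrable f P) (h0 : 0 ≤ f) (h1 : f ≤ fun _ => 1) :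
    ∫ ω, ((P[f|m']) ω - (P[f|m]) ω) ^ 2 ∂P
      = ∫ ω, (P[f|m']) ω ^ 2 ∂P - ∫ ω, (P[f|m]) ω ^ 2 ∂P := by
  have h1m : m ≤ mΩ := h12.trans h2
  have hsq1 := sq_integrable_condexp h1m hfi h0 h1
  have hsq2 := sq_integrable_condexp h2 hfi h0 h1
  have hb1 : ∀ᵐ ω ∂P, ‖(P[f|m]) ω‖ ≤ 1 := abs_condexp_le01 h1m hfi h0 h1
  have hint12 : Integrable (fun ω => (P[f|m]) ω * (P[f|m']) ω) P :=
    Integrable.bdd_mul (integrable_condExp)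
      (stronglyMeasurable_condExp.mono h1m).aestronglyMeasurable hb1
  calc ∫ ω, ((P[f|m']) ω - (P[f|m]) ω) ^ 2 ∂P
      = ∫ ω, ((P[f|m']) ω ^ 2 - (2 * ((P[f|m]) ω * (P[f|m']) ω) - (P[f|m]) ω ^ 2)) ∂P := by
        refine integral_congr_ae (Eventually.of_forall fun ω => ?_); ring
    _ = ∫ ω, (P[f|m']) ω ^ 2 ∂P
          - ∫ ω, (2 * ((P[f|m]) ω * (P[f|m']) ω) - (P[f|m]) ω ^ 2) ∂P :=
        integral_sub hsq2 ((hint12.const_mul 2).sub hsq1)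
    _ = ∫ ω, (P[f|m']) ω ^ 2 ∂P
          - (∫ ω, 2 * ((P[f|m]) ω * (P[f|m']) ω) ∂P - ∫ ω, (P[f|m]) ω ^ 2 ∂P) := by
        rw [integral_sub (hint12.const_mul 2) hsq1]
    _ = ∫ ω, (P[f|m']) ω ^ 2 ∂P - ∫ ω, (P[f|m]) ω ^ 2 ∂P := by
        rw [MeasureTheory.integral_const_mul, key0 h12 h2 hfi h0 h1]; ring

/-- variance difference of nested conditional expectations. -/
lemma key2 (h12 : m ≤ m') (h2 : m' ≤ mΩ)
    (hfi : Integrable f P) (h0 : 0 ≤ f) (h1 : f ≤ fun _ => 1) :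
    variance (P[f|m']) P - variance (P[f|m]) P
      = ∫ ω, ((P[f|m']) ω - (P[f|m]) ω) ^ 2 ∂P := by
  have h1m : m ≤ mΩ := h12.trans h2
  have hv1 := variance_eq_sub (memℒ2_condexp01 h1m hfi h0 h1)
  have hv2 := variance_eq_sub (memℒ2_condexp01 h2 hfi h0 h1)
  simp only [Pi.pow_apply] at hv1 hv2
  rw [hv1, hv2, integral_condExp h1m, integral_condExp h2, key1 h12 h2 hfi h0 h1]
  ring

lemma key2_top (hm : m ≤ mΩ) (hfi : Integrable f P) (hfm : StronglyMeasurable f)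
    (h0 : 0 ≤ f) (h1 : f ≤ fun _ => 1) :
    variance f P - variance (P[f|m]) P = ∫ ω, (f ω - (P[f|m]) ω) ^ 2 ∂P := by
  have h := key2 (m := m) (m' := mΩ) hm le_rfl hfi h0 h1
  rwa [condExp_of_stronglyMeasurable le_rfl hfm hfi] at h

lemma var_condexp_mono (h12 : m ≤ m') (h2 : m' ≤ mΩ) (hfi : Integrable f P)
    (h0 : 0 ≤ f) (h1 : f ≤ fun _ => 1) :
    variance (P[f|m]) P ≤ variance (P[f|m']) P := by
  have h := key2 h12 h2 hfi h0 h1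
  have h' : 0 ≤ ∫ ω, ((P[f|m']) ω - (P[f|m]) ω) ^ 2 ∂P :=
    integral_nonneg fun ω => sq_nonneg _
  linarith

lemma var_condexp_le (hm : m ≤ mΩ) (hfi : Integrable f P) (hfm : StronglyMeasurable f)
    (h0 : 0 ≤ f) (h1 : f ≤ fun _ => 1) :
    variance (P[f|m]) P ≤ variance f P := by
  have h := key2_top hm hfi hfm h0 h1
  have h' : 0 ≤ ∫ ω, (f ω - (P[f|m]) ω) ^ 2 ∂P := integral_nonneg fun ω => sq_nonneg _
  linarith

lemma sq_diff_integrable (h1m : m ≤ mΩ) (h2 : m' ≤ mΩ) (hfi : Integrable f P)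
    (h0 : 0 ≤ f) (h1 : f ≤ fun _ => 1) :
    Integrable (fun ω => ((P[f|m']) ω - (P[f|m]) ω) ^ 2) P := by
  have hsub : Integrable (fun ω => (P[f|m']) ω - (P[f|m]) ω) P :=
    integrable_condExp.sub integrable_condExp
  have : (fun ω => ((P[f|m']) ω - (P[f|m]) ω) ^ 2)
      = fun ω => ((P[f|m']) ω - (P[f|m]) ω) * ((P[f|m']) ω - (P[f|m]) ω) := by
    funext ω; ring
  rw [this]
  refine Integrable.bdd_mul (c := 2) hsub (hsub.aestronglyMeasurable) ?_
  filter_upwards [abs_condexp_le01 h2 hfi h0 h1, abs_condexp_le01 h1m hfi h0 h1] with ω hb2 hb1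
  calc ‖(P[f|m']) ω - (P[f|m]) ω‖ ≤ ‖(P[f|m']) ω‖ + ‖(P[f|m]) ω‖ := norm_sub_le _ _
    _ ≤ 2 := by linarith

lemma var_eq_iff (h12 : m ≤ m') (h2 : m' ≤ mΩ) (hfi : Integrable f P)
    (h0 : 0 ≤ f) (h1 : f ≤ fun _ => 1) :
    variance (P[f|m']) P = variance (P[f|m]) P ↔ P[f|m'] =ᵐ[P] P[f|m] := by
  have h1m : m ≤ mΩ := h12.trans h2
  constructor
  · intro h
    have hz : ∫ ω, ((P[f|m']) ω - (P[f|m]) ω) ^ 2 ∂P = 0 := by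
      rw [← key2 h12 h2 hfi h0 h1]; linarith
    have := (integral_eq_zero_iff_of_nonneg (fun ω => sq_nonneg _)
      (sq_diff_integrable h1m h2 hfi h0 h1)).1 hz
    filter_upwards [this] with ω hω
    have h2' : ((P[f|m']) ω - (P[f|m]) ω) ^ 2 = 0 := hω
    have := pow_eq_zero_iff (n := 2) (by norm_num) |>.1 h2'
    linarith [sub_eq_zero.1 this]
  · intro h
    have hv1 := variance_eq_sub (memℒ2_condexp01 h1m hfi h0 h1)
    have hv2 := variance_eq_sub (memℒ2_condexp01 h2 hfi h0 h1)
    simp only [Pi.pow_apply] at hv1 hv2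
    have e1 : ∫ ω, (P[f|m']) ω ^ 2 ∂P = ∫ ω, (P[f|m]) ω ^ 2 ∂P :=
      integral_congr_ae (h.mono fun ω e => by dsimp only; rw [e])
    have e2 : ∫ ω, (P[f|m']) ω ∂P = ∫ ω, (P[f|m]) ω ∂P := integral_congr_ae h
    rw [hv1, hv2, e1, e2]

lemma variance_const' (c : ℝ) : variance (fun _ : Ω => c) P = 0 := by
  have := variance_eq_sub (μ := P) (memLp_const (E := ℝ) (p := 2) c)
  simp only [Pi.pow_apply] at this
  rw [this]
  simp [integral_const]

end bounded

section Wsec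

variable {W : Ω → ℝ}

noncomputable def Fb (P : Measure Ω) (W : Ω → ℝ) (y : ℝ) : ℝ := ∫ ω, fI W y ω ∂P

noncomputable def gS (m : MeasurableSpace Ω) {mΩ : MeasurableSpace Ω} (P : Measure Ω)
    (W : Ω → ℝ) (y : ℝ) : ℝ := ∫ ω, (P[fI W y|m]) ω ^ 2 ∂P

noncomputable def NN (m : MeasurableSpace Ω) {mΩ : MeasurableSpace Ω} (P : Measure Ω)
    (W : Ω → ℝ) (y : ℝ) : ℝ := variance (P[fI W y|m]) P

noncomputable def DD (P : Measure Ω) (W : Ω → ℝ) (y : ℝ) : ℝ := variance (fI W y) P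

noncomputable def numI (m : MeasurableSpace Ω) {mΩ : MeasurableSpace Ω} (P : Measure Ω)
    (W : Ω → ℝ) : ℝ := ∫ y, NN m P W y ∂(P.map W)

noncomputable def denI (P : Measure Ω) (W : Ω → ℝ) : ℝ := ∫ y, DD P W y ∂(P.map W)

lemma Fb_eq (hW : Measurable W) (y : ℝ) : Fb P W y = (P {ω | y ≤ W ω}).toReal := by
  rw [Fb, fI, integral_indicator_const (1 : ℝ) (measurableSet_fI hW y), smul_eq_mul, mul_one, measureReal_def]

lemma Fb_map (hW : Measurable W) (y : ℝ) : Fb P W y = ((P.map W) (Set.Ici y)).toReal := by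
  rw [Fb_eq hW, Measure.map_apply hW measurableSet_Ici, setOf_le_eq_preimage]

lemma Fb_anti (hW : Measurable W) : Antitone (Fb P W) := by
  intro y y' hyy
  refine integral_mono (fI_int hW y') (fI_int hW y) ?_
  refine Set.indicator_le_indicator_of_subset ?_ (fun _ => zero_le_one)
  exact fun ω (h : y' ≤ W ω) => le_trans hyy h

lemma Fb_nonneg (y : ℝ) : 0 ≤ Fb P W y := integral_nonneg (fI_nonneg W y)

lemma Fb_le_one (hW : Measurable W) (y : ℝ) : Fb P W y ≤ 1 := by
  have := integral_mono (μ := P) (fI_int hW y) (integrable_const 1) (fI_le_one W y)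
  simpa [Fb] using this

lemma gS_anti (hW : Measurable W) (hm : m ≤ mΩ) : Antitone (gS m P W) := by
  intro y y' hyy
  refine integral_mono_ae (sq_integrable_condexp hm (fI_int hW y') (fI_nonneg W y') (fI_le_one W y'))
    (sq_integrable_condexp hm (fI_int hW y) (fI_nonneg W y) (fI_le_one W y)) ?_
  have hle : fI W y' ≤ᵐ[P] fI W y := Eventually.of_forall (by
    refine Set.indicator_le_indicator_of_subset ?_ (fun _ => zero_le_one)
    exact fun ω (h : y' ≤ W ω) => le_trans hyy h)
  have hmono := condExp_mono (m := m) (fI_int hW y') (fI_int hW y) hle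
  have hnn : (0 : Ω → ℝ) ≤ᵐ[P] P[fI W y'|m] := condExp_nonneg (Eventually.of_forall (fI_nonneg W y'))
  filter_upwards [hmono, hnn] with ω h1 h2
  exact pow_le_pow_left₀ h2 h1 2

lemma NN_eq (hW : Measurable W) (hm : m ≤ mΩ) (y : ℝ) :
    NN m P W y = gS m P W y - (Fb P W y) ^ 2 := by
  have := variance_eq_sub (μ := P) (memℒ2_condexp01 hm (fI_int hW y) (fI_nonneg W y) (fI_le_one W y))
  simp only [Pi.pow_apply] at this
  rw [NN, this, integral_condExp hm, gS, Fb]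

lemma DD_eq (hW : Measurable W) (y : ℝ) : DD P W y = Fb P W y - (Fb P W y) ^ 2 := by
  have hml : MemLp (fI W y) 2 P := MemLp.of_bound (fI_meas hW y).aestronglyMeasurable 1
    (Eventually.of_forall (fun ω => by
      simp only [fI, Set.indicator_apply, Real.norm_eq_abs]; split <;> norm_num))
  have := variance_eq_sub hml
  simp only [Pi.pow_apply] at this
  rw [DD, this, Fb]
  congr 1
  exact integral_congr_ae (Eventually.of_forall fun ω => congrFun (fI_sq W y) ω)

lemma NN_nonneg (y : ℝ) : 0 ≤ NN m P W y := variance_nonneg _ _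

lemma DD_nonneg (y : ℝ) : 0 ≤ DD P W y := variance_nonneg _ _

lemma NN_le_DD (hW : Measurable W) (hm : m ≤ mΩ) (y : ℝ) : NN m P W y ≤ DD P W y :=
  var_condexp_le hm (fI_int hW y) (fI_meas hW y).stronglyMeasurable (fI_nonneg W y) (fI_le_one W y)

lemma DD_le_one (hW : Measurable W) (y : ℝ) : DD P W y ≤ 1 := by
  have h0 := Fb_nonneg (P := P) (W := W) y
  have h1 := Fb_le_one (P := P) hW y
  rw [DD_eq hW y]; nlinarith

lemma meas_NN (hW : Measurable W) (hm : m ≤ mΩ) : Measurable (NN m P W) := by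
  have : NN m P W = fun y => gS m P W y - (Fb P W y) ^ 2 := funext (NN_eq hW hm)
  rw [this]
  exact ((gS_anti hW hm).measurable).sub (((Fb_anti hW).measurable).pow_const 2)

lemma meas_DD (hW : Measurable W) : Measurable (DD P W) := by
  have : DD P W = fun y => Fb P W y - (Fb P W y) ^ 2 := funext (DD_eq hW)
  rw [this]
  exact ((Fb_anti hW).measurable).sub (((Fb_anti hW).measurable).pow_const 2)

lemma int_NN (hW : Measurable W) (hm : m ≤ mΩ) : Integrable (NN m P W) (P.map W) := by
  haveI : IsProbabilityMeasure (P.map W) := Measure.isProbabilityMeasure_map hW.aemeasurable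
  refine Integrable.mono' (integrable_const 1) (meas_NN hW hm).aestronglyMeasurable ?_
  refine Eventually.of_forall fun y => ?_
  rw [Real.norm_eq_abs, abs_le]
  exact ⟨by linarith [NN_nonneg (m := m) (P := P) (W := W) y],
    le_trans (NN_le_DD hW hm y) (DD_le_one hW y)⟩

lemma int_DD (hW : Measurable W) : Integrable (DD P W) (P.map W) := by
  haveI : IsProbabilityMeasure (P.map W) := Measure.isProbabilityMeasure_map hW.aemeasurable
  refine Integrable.mono' (integrable_const 1) (meas_DD hW).aestronglyMeasurable ?_
  refine Eventually.of_forall fun y => ?_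
  rw [Real.norm_eq_abs, abs_le]
  exact ⟨by linarith [DD_nonneg (P := P) (W := W) y], DD_le_one hW y⟩

lemma numI_mono (hW : Measurable W) (h12 : m ≤ m') (h2 : m' ≤ mΩ) :
    numI m P W ≤ numI m' P W := by
  refine integral_mono (int_NN hW (h12.trans h2)) (int_NN hW h2) fun y => ?_
  exact var_condexp_mono h12 h2 (fI_int hW y) (fI_nonneg W y) (fI_le_one W y)

lemma numI_nonneg : 0 ≤ numI m P W := integral_nonneg fun y => NN_nonneg y

lemma numI_le_denI (hW : Measurable W) (hm : m ≤ mΩ) : numI m P W ≤ denI P W :=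
  integral_mono (int_NN hW hm) (int_DD hW) fun y => NN_le_DD hW hm y

lemma denI_nonneg : 0 ≤ denI P W := integral_nonneg fun y => DD_nonneg y

lemma numI_bot (hW : Measurable W) : numI (⊥ : MeasurableSpace Ω) P W = 0 := by
  have : ∀ y, NN (⊥ : MeasurableSpace Ω) P W y = 0 := by
    intro y
    rw [NN, condExp_bot, variance_const']
  rw [numI]
  simp only [this, integral_zero]

lemma numI_eq_iff (hW : Measurable W) (h12 : m ≤ m') (h2 : m' ≤ mΩ) :
    numI m' P W = numI m P W ↔
      ∀ᵐ y ∂(P.map W), P[fI W y|m'] =ᵐ[P] P[fI W y|m] := by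
  have h1m : m ≤ mΩ := h12.trans h2
  constructor
  · intro h
    have hz : ∫ y, (NN m' P W y - NN m P W y) ∂(P.map W) = 0 := by
      rw [integral_sub (int_NN hW h2) (int_NN hW h1m)]
      have h' : numI m' P W - numI m P W = 0 := by rw [h]; ring
      exact h'
    have hnn : 0 ≤ fun y => NN m' P W y - NN m P W y := fun y =>
      sub_nonneg.2 (var_condexp_mono h12 h2 (fI_int hW y) (fI_nonneg W y) (fI_le_one W y))
    have := (integral_eq_zero_iff_of_nonneg hnn
      ((int_NN hW h2).sub (int_NN hW h1m))).1 hz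
    filter_upwards [this] with y hy
    have heq : NN m' P W y = NN m P W y := by
      have : NN m' P W y - NN m P W y = 0 := hy
      linarith
    exact (var_eq_iff h12 h2 (fI_int hW y) (fI_nonneg W y) (fI_le_one W y)).1 heq
  · intro h
    refine integral_congr_ae (h.mono fun y hy => ?_)
    exact (var_eq_iff h12 h2 (fI_int hW y) (fI_nonneg W y) (fI_le_one W y)).2 hy

lemma null_iUnion_Ici {α : Measure ℝ} {B : Set ℝ}
    (hB : ∀ b ∈ B, α (Set.Ici b) = 0) : α (⋃ b ∈ B, Set.Ici b) = 0 := by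
  rcases B.eq_empty_or_nonempty with rfl | hne
  · simp
  refine le_antisymm ?_ (zero_le)
  by_cases hbb : BddBelow B
  · set i := sInf B with hi
    by_cases hiB : i ∈ B
    · refine le_trans (measure_mono ?_) (hB i hiB).le
      intro x hx
      obtain ⟨b, hbB, hxb⟩ := by simpa using hx
      exact le_trans (csInf_le hbb hbB) hxb
    · have hsub : (⋃ b ∈ B, Set.Ici b) ⊆ ⋃ n : ℕ, Set.Ici (i + 1 / (n + 1)) := by
        intro x hx
        obtain ⟨b, hbB, hxb⟩ := by simpa using hx
        have hib : i < b := lt_of_le_of_ne (csInf_le hbb hbB) (fun h => hiB (h ▸ hbB))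
        obtain ⟨n, hn⟩ := exists_nat_one_div_lt (sub_pos.2 (lt_of_lt_of_le hib hxb))
        exact Set.mem_iUnion.2 ⟨n, by simp only [Set.mem_Ici]; linarith⟩
      refine le_trans (measure_mono hsub) (le_trans (measure_iUnion_le _) ?_)
      have hz : ∀ n : ℕ, α (Set.Ici (i + 1 / ((n:ℝ) + 1))) = 0 := by
        intro n
        obtain ⟨b, hbB, hb⟩ := exists_lt_of_csInf_lt hne
          (lt_add_of_pos_right i (by positivity : (0:ℝ) < 1 / ((n:ℝ) + 1)))
        exact le_antisymm
          (le_trans (measure_mono (Set.Ici_subset_Ici.2 hb.le)) (hB b hbB).le) (zero_le)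
      exact le_of_eq ((tsum_congr hz).trans tsum_zero)
  · rw [not_bddBelow_iff] at hbb
    have hch : ∀ n : ℕ, ∃ b ∈ B, b < -(n : ℝ) := fun n => hbb (-(n : ℝ))
    choose b hbB hbn using hch
    have hsub : (⋃ c ∈ B, Set.Ici c) ⊆ ⋃ n : ℕ, Set.Ici (b n) := by
      intro x hx
      obtain ⟨n, hn⟩ := exists_nat_ge (-x)
      exact Set.mem_iUnion.2 ⟨n, by simp only [Set.mem_Ici]; nlinarith [hbn n]⟩
    refine le_trans (measure_mono hsub) (le_trans (measure_iUnion_le _) ?_)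
    have hz : ∀ n : ℕ, α (Set.Ici (b n)) = 0 := fun n => hB (b n) (hbB n)
    simp [hz]

lemma null_iUnion_Iio {α : Measure ℝ} {A : Set ℝ}
    (hA : ∀ a ∈ A, α (Set.Iio a) = 0) : α (⋃ a ∈ A, Set.Iio a) = 0 := by
  rcases A.eq_empty_or_nonempty with rfl | hne
  · simp
  refine le_antisymm ?_ (zero_le)
  by_cases hba : BddAbove A
  · set s := sSup A with hs
    have hsub : (⋃ a ∈ A, Set.Iio a) ⊆ ⋃ n : ℕ, Set.Iio (s - 1 / (n + 1)) := by
      intro x hx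
      obtain ⟨a, haA, hxa⟩ := by simpa using hx
      have has : x < s := lt_of_lt_of_le hxa (le_csSup hba haA)
      obtain ⟨n, hn⟩ := exists_nat_one_div_lt (sub_pos.2 has)
      exact Set.mem_iUnion.2 ⟨n, by simp only [Set.mem_Iio]; linarith⟩
    refine le_trans (measure_mono hsub) (le_trans (measure_iUnion_le _) ?_)
    have hz : ∀ n : ℕ, α (Set.Iio (s - 1 / ((n:ℝ) + 1))) = 0 := by
      intro n
      obtain ⟨a, haA, ha⟩ := exists_lt_of_lt_csSup hne
        (by linarith [ (by positivity : (0:ℝ) < 1 / ((n:ℝ) + 1))] : s - 1 / ((n:ℝ)+1) < s)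
      exact le_antisymm
        (le_trans (measure_mono (Set.Iio_subset_Iio ha.le)) (hA a haA).le) (zero_le)
    exact le_of_eq ((tsum_congr hz).trans tsum_zero)
  · rw [not_bddAbove_iff] at hba
    have hch : ∀ n : ℕ, ∃ a ∈ A, (n : ℝ) < a := fun n => hba (n : ℝ)
    choose a haA han using hch
    have hsub : (⋃ c ∈ A, Set.Iio c) ⊆ ⋃ n : ℕ, Set.Iio (a n) := by
      intro x hx
      obtain ⟨n, hn⟩ := exists_nat_ge x
      exact Set.mem_iUnion.2 ⟨n, by simp only [Set.mem_Iio]; nlinarith [han n]⟩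
    refine le_trans (measure_mono hsub) (le_trans (measure_iUnion_le _) ?_)
    have hz : ∀ n : ℕ, α (Set.Iio (a n)) = 0 := fun n => hA (a n) (haA n)
    simp [hz]

/-- If `α(Ici y) ∈ {0,1}` for `α`-a.e. `y`, then `α` is a Dirac mass. -/
lemma exists_ae_const {α : Measure ℝ} [IsProbabilityMeasure α]
    (hG : α {y : ℝ | ¬(α (Set.Ici y) = 1 ∨ α (Set.Ici y) = 0)} = 0) :
    ∃ c : ℝ, α ({c}ᶜ) = 0 := by
  set A := {y : ℝ | α (Set.Ici y) = 1} with hA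
  set B := {y : ℝ | α (Set.Ici y) = 0} with hB
  set bad := {y : ℝ | ¬(α (Set.Ici y) = 1 ∨ α (Set.Ici y) = 0)} with hbad
  have hLA : α (⋃ a ∈ A, Set.Iio a) = 0 := by
    refine null_iUnion_Iio fun a haA => ?_
    have : α (Set.Iio a) = α ((Set.Ici a)ᶜ) := by rw [Set.compl_Ici]
    rw [this, prob_compl_eq_one_sub measurableSet_Ici, haA, tsub_self]
  have hUB : α (⋃ b ∈ B, Set.Ici b) = 0 := null_iUnion_Ici fun b hbB => hbB
  have hAne : A.Nonempty := by
    by_contra hAe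
    rw [Set.not_nonempty_iff_eq_empty] at hAe
    have hcover : (Set.univ : Set ℝ) ⊆ bad ∪ ⋃ b ∈ B, Set.Ici b := by
      intro y _
      by_cases hy : α (Set.Ici y) = 1 ∨ α (Set.Ici y) = 0
      · rcases hy with hy | hy
        · exact absurd (show y ∈ A from hy) (by simp [hAe])
        · exact Or.inr (Set.mem_biUnion hy Set.self_mem_Ici)
      · exact Or.inl hy
    have : (1 : ENNReal) ≤ 0 := by
      calc (1 : ENNReal) = α Set.univ := (measure_univ).symm
        _ ≤ α (bad ∪ ⋃ b ∈ B, Set.Ici b) := measure_mono hcover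
        _ ≤ α bad + α (⋃ b ∈ B, Set.Ici b) := measure_union_le _ _
        _ = 0 := by rw [hG, hUB, add_zero]
    simp at this
  have hAbdd : BddAbove A := by
    by_contra hbd
    rw [not_bddAbove_iff] at hbd
    have hcover : (Set.univ : Set ℝ) ⊆ ⋃ a ∈ A, Set.Iio a := by
      intro y _
      obtain ⟨a, haA, hya⟩ := hbd y
      exact Set.mem_biUnion haA hya
    have : (1 : ENNReal) ≤ 0 := by
      calc (1 : ENNReal) = α Set.univ := (measure_univ).symm
        _ ≤ α (⋃ a ∈ A, Set.Iio a) := measure_mono hcover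
        _ = 0 := hLA
    simp at this
  refine ⟨sSup A, ?_⟩
  have hcover : ({sSup A}ᶜ : Set ℝ) ⊆ bad ∪ ((⋃ b ∈ B, Set.Ici b) ∪ ⋃ a ∈ A, Set.Iio a) := by
    intro y hy
    rcases lt_trichotomy y (sSup A) with h | h | h
    · obtain ⟨a, haA, hya⟩ := exists_lt_of_lt_csSup hAne h
      exact Or.inr (Or.inr (Set.mem_biUnion haA hya))
    · exact absurd h hy
    · by_cases hg : α (Set.Ici y) = 1 ∨ α (Set.Ici y) = 0
      · rcases hg with hg | hg
        · exact absurd (le_csSup hAbdd (show y ∈ A from hg)) (not_le.2 h)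
        · exact Or.inr (Or.inl (Set.mem_biUnion hg Set.self_mem_Ici))
      · exact Or.inl hg
  refine le_antisymm ?_ (zero_le)
  calc α ({sSup A}ᶜ) ≤ α (bad ∪ ((⋃ b ∈ B, Set.Ici b) ∪ ⋃ a ∈ A, Set.Iio a)) :=
        measure_mono hcover
    _ ≤ α bad + α ((⋃ b ∈ B, Set.Ici b) ∪ ⋃ a ∈ A, Set.Iio a) := measure_union_le _ _
    _ ≤ α bad + (α (⋃ b ∈ B, Set.Ici b) + α (⋃ a ∈ A, Set.Iio a)) := by
        exact add_le_add le_rfl (measure_union_le _ _)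
    _ = 0 := by rw [hG, hUB, hLA]; simp

lemma denI_pos (hW : Measurable W) (hnd : Nondegenerate P W) : 0 < denI P W := by
  haveI : IsProbabilityMeasure (P.map W) := Measure.isProbabilityMeasure_map hW.aemeasurable
  rcases lt_or_eq_of_le (denI_nonneg (P := P) (W := W)) with h | h
  · exact h
  exfalso
  have hDD : ∀ᵐ y ∂(P.map W), DD P W y = 0 :=
    (integral_eq_zero_iff_of_nonneg (fun y => DD_nonneg y) (int_DD hW)).1 h.symm
  have hgood : ∀ᵐ y ∂(P.map W),
      (P.map W) (Set.Ici y) = 1 ∨ (P.map W) (Set.Ici y) = 0 := by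
    filter_upwards [hDD] with y hy
    rw [DD_eq hW y] at hy
    have hFb : Fb P W y = 0 ∨ Fb P W y = 1 := by
      have : Fb P W y * (1 - Fb P W y) = 0 := by linarith [hy]
      rcases mul_eq_zero.1 this with h' | h'
      · exact Or.inl h'
      · exact Or.inr (by linarith)
    have hmap : Fb P W y = ((P.map W) (Set.Ici y)).toReal := Fb_map hW y
    have hfin : (P.map W) (Set.Ici y) ≠ ⊤ := measure_ne_top _ _
    rcases hFb with h' | h'
    · right
      rw [hmap] at h'
      exact (ENNReal.toReal_eq_zero_iff _).1 h' |>.resolve_right hfin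
    · left
      rw [hmap] at h'
      rwa [ENNReal.toReal_eq_one_iff] at h'
  have hGnull : (P.map W) {y : ℝ | ¬((P.map W) (Set.Ici y) = 1 ∨ (P.map W) (Set.Ici y) = 0)} = 0 := by
    rw [← ae_iff] at *
    exact hgood
  obtain ⟨c, hc⟩ := exists_ae_const hGnull
  refine hnd ⟨c, ?_⟩
  rw [ae_iff]
  have : {ω | ¬W ω = c} = W ⁻¹' ({c}ᶜ) := rfl
  rw [this, ← Measure.map_apply hW (measurableSet_singleton c).compl]
  exact hc

lemma xiSigma_def (W : Ω → ℝ) : xiSigma m P W = numI m P W / denI P W := rfl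

lemma xiSigma_nonneg (W : Ω → ℝ) : 0 ≤ xiSigma m P W :=
  div_nonneg numI_nonneg denI_nonneg

lemma xiSigma_le_one (hW : Measurable W) (hm : m ≤ mΩ) (hnd : Nondegenerate P W) :
    xiSigma m P W ≤ 1 :=
  (div_le_one (denI_pos hW hnd)).2 (numI_le_denI hW hm)

lemma xiSigma_bot (hW : Measurable W) : xiSigma (⊥ : MeasurableSpace Ω) P W = 0 := by
  rw [xiSigma_def, numI_bot hW, zero_div]

lemma xiSigma_mono (hW : Measurable W) (h12 : m ≤ m') (h2 : m' ≤ mΩ)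
    (hnd : Nondegenerate P W) : xiSigma m P W ≤ xiSigma m' P W := by
  rw [xiSigma_def, xiSigma_def]
  exact (div_le_div_iff_of_pos_right (denI_pos hW hnd)).2 (numI_mono hW h12 h2)

lemma xiSigma_eq_iff (hW : Measurable W) (h12 : m ≤ m') (h2 : m' ≤ mΩ)
    (hnd : Nondegenerate P W) :
    xiSigma m' P W = xiSigma m P W ↔
      ∀ᵐ y ∂(P.map W), P[fI W y|m'] =ᵐ[P] P[fI W y|m] := by
  rw [xiSigma_def, xiSigma_def, div_left_inj' (denI_pos hW hnd).ne']
  exact numI_eq_iff hW h12 h2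

end Wsec

section Tsec

variable {q : ℕ} {V : Fin q → Ω → ℝ}

lemma sigmaPast_le (hV : ∀ j, Measurable (V j)) (i : Fin q) : sigmaPast V i ≤ mΩ :=
  iSup_le fun j => iSup_le fun _ => (hV j).comap_le

lemma sigmaPast_zero (V : Fin q → Ω → ℝ) (i : Fin q) (hi : (i : ℕ) = 0) :
    sigmaPast V i = ⊥ := by
  refine le_antisymm (iSup_le fun j => iSup_le fun hj => ?_) bot_le
  exact absurd (Fin.lt_def.1 hj) (by omega)

lemma T_le_and_iff {γ γ' : Type*} [MeasurableSpace γ] [MeasurableSpace γ']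
    {X : Ω → γ} {X' : Ω → γ'} (hX : Measurable X) (hX' : Measurable X')
    (hcle : MeasurableSpace.comap X inferInstance ≤ MeasurableSpace.comap X' inferInstance)
    (hV : ∀ i, Measurable (V i)) (hnd : ∀ i, Nondegenerate P (V i)) (hq : 0 < q) :
    T P V X ≤ T P V X' ∧ (T P V X = T P V X' ↔ ∀ i : Fin q, ∀ᵐ y ∂(P.map (V i)),
      P[fI (V i) y | MeasurableSpace.comap X' inferInstance ⊔ sigmaPast V i]
        =ᵐ[P] P[fI (V i) y | MeasurableSpace.comap X inferInstance ⊔ sigmaPast V i]) := by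
  classical
  set mA : Fin q → MeasurableSpace Ω :=
    fun i => MeasurableSpace.comap X inferInstance ⊔ sigmaPast V i with hmA
  set mB : Fin q → MeasurableSpace Ω :=
    fun i => MeasurableSpace.comap X' inferInstance ⊔ sigmaPast V i with hmB
  have hAB : ∀ i, mA i ≤ mB i := fun i => sup_le_sup_right hcle _
  have hBle : ∀ i, mB i ≤ mΩ := fun i => sup_le hX'.comap_le (sigmaPast_le hV i)
  set S0 : ℝ := ∑ i, xiSigma (sigmaPast V i) P (V i) with hS0def
  set SA : ℝ := ∑ i, xiSigma (mA i) P (V i) with hSAdef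
  set SB : ℝ := ∑ i, xiSigma (mB i) P (V i) with hSBdef
  have hS0 : S0 ≤ (q : ℝ) - 1 := by
    set i0 : Fin q := ⟨0, hq⟩ with hi0
    have h0 : xiSigma (sigmaPast V i0) P (V i0) = 0 := by
      rw [sigmaPast_zero V i0 rfl]; exact xiSigma_bot (hV i0)
    have hsum := Finset.add_sum_erase Finset.univ
      (fun i => xiSigma (sigmaPast V i) P (V i)) (Finset.mem_univ i0)
    have hrest : ∑ x ∈ Finset.univ.erase i0, xiSigma (sigmaPast V x) P (V x)
        ≤ ((Finset.univ.erase i0).card : ℝ) := by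
      have := Finset.sum_le_card_nsmul (Finset.univ.erase i0)
        (fun x => xiSigma (sigmaPast V x) P (V x)) 1
        (fun x _ => xiSigma_le_one (hV x) (sigmaPast_le hV x) (hnd x))
      simpa using this
    have hcard : ((Finset.univ.erase i0).card : ℝ) = (q : ℝ) - 1 := by
      rw [Finset.card_erase_of_mem (Finset.mem_univ i0)]
      simp only [Finset.card_univ, Fintype.card_fin]
      rw [Nat.cast_sub hq]; norm_num
    have hsum' : xiSigma (sigmaPast V i0) P (V i0)
        + ∑ x ∈ Finset.univ.erase i0, xiSigma (sigmaPast V x) P (V x) = S0 := hsum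
    rw [hcard] at hrest
    linarith [hsum', hrest, h0]
  have hq1 : (1 : ℝ) ≤ (q : ℝ) := by exact_mod_cast hq
  have hden : 0 < (q : ℝ) - S0 := by linarith
  have hSAB : SA ≤ SB :=
    Finset.sum_le_sum fun i _ => xiSigma_mono (hV i) (hAB i) (hBle i) (hnd i)
  have hTX : T P V X = 1 - ((q : ℝ) - SA) / ((q : ℝ) - S0) := rfl
  have hTX' : T P V X' = 1 - ((q : ℝ) - SB) / ((q : ℝ) - S0) := rfl
  constructor
  · rw [hTX, hTX']
    have : ((q : ℝ) - SB) / ((q : ℝ) - S0) ≤ ((q : ℝ) - SA) / ((q : ℝ) - S0) :=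
      (div_le_div_iff_of_pos_right hden).2 (by linarith)
    linarith
  · rw [hTX, hTX']
    constructor
    · intro h
      have h2 : ((q : ℝ) - SA) / ((q : ℝ) - S0) = ((q : ℝ) - SB) / ((q : ℝ) - S0) := by
        linarith
      have h3 : SA = SB := by
        have := (div_left_inj' hden.ne').1 h2
        linarith
      have h4 := (Finset.sum_eq_sum_iff_of_le
        (fun i _ => xiSigma_mono (hV i) (hAB i) (hBle i) (hnd i))).1 h3
      intro i
      exact (xiSigma_eq_iff (hV i) (hAB i) (hBle i) (hnd i)).1
        ((h4 i (Finset.mem_univ i)).symm)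
    · intro h
      have h3 : SA = SB := by
        rw [hSAdef, hSBdef]
        refine Finset.sum_congr rfl fun i _ => ?_
        exact ((xiSigma_eq_iff (hV i) (hAB i) (hBle i) (hnd i)).2 (h i)).symm
      rw [h3]

end Tsec

section Tbarsec

variable {q : ℕ} {Y : Fin q → Ω → ℝ}

lemma Tbar_le_and_iff {γ γ' : Type*} [MeasurableSpace γ] [MeasurableSpace γ']
    {X : Ω → γ} {X' : Ω → γ'} (hX : Measurable X) (hX' : Measurable X')
    (hcle : MeasurableSpace.comap X inferInstance ≤ MeasurableSpace.comap X' inferInstance)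
    (hY : ∀ i, Measurable (Y i)) (hnd : ∀ i, Nondegenerate P (Y i)) (hq : 0 < q) :
    Tbar P Y X ≤ Tbar P Y X' ∧ (Tbar P Y X = Tbar P Y X' ↔
      ∀ σ : Equiv.Perm (Fin q), ∀ i : Fin q, ∀ᵐ y ∂(P.map (Y (σ i))),
        P[fI (Y (σ i)) y | MeasurableSpace.comap X' inferInstance
            ⊔ sigmaPast (fun j => Y (σ j)) i]
          =ᵐ[P] P[fI (Y (σ i)) y | MeasurableSpace.comap X inferInstance
            ⊔ sigmaPast (fun j => Y (σ j)) i]) := by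
  classical
  have hfac : (0 : ℝ) < 1 / (Nat.factorial q : ℝ) := by positivity
  have hper : ∀ σ : Equiv.Perm (Fin q),
      T P (fun i => Y (σ i)) X ≤ T P (fun i => Y (σ i)) X' ∧ _ :=
    fun σ => T_le_and_iff (V := fun i => Y (σ i)) hX hX' hcle
      (fun i => hY (σ i)) (fun i => hnd (σ i)) hq
  constructor
  · rw [Tbar, Tbar]
    refine mul_le_mul_of_nonneg_left ?_ hfac.le
    exact Finset.sum_le_sum fun σ _ => (hper σ).1
  · rw [Tbar, Tbar]
    constructor
    · intro h
      have hsums : ∑ σ : Equiv.Perm (Fin q), T P (fun i => Y (σ i)) X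
          = ∑ σ : Equiv.Perm (Fin q), T P (fun i => Y (σ i)) X' :=
        mul_left_cancel₀ hfac.ne' h
      have := (Finset.sum_eq_sum_iff_of_le (fun σ _ => (hper σ).1)).1 hsums
      intro σ i
      exact ((hper σ).2.1 (this σ (Finset.mem_univ σ))) i
    · intro h
      have hsums : ∑ σ : Equiv.Perm (Fin q), T P (fun i => Y (σ i)) X
          = ∑ σ : Equiv.Perm (Fin q), T P (fun i => Y (σ i)) X' := by
        refine Finset.sum_congr rfl fun σ _ => ?_
        exact (hper σ).2.2 (h σ)
      rw [hsums]

end Tbarsec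

section PartII

/-- the indicator function of a set, with value 1. -/
noncomputable def ind (U : Set Ω) : Ω → ℝ := U.indicator fun _ => (1 : ℝ)

lemma ind_nonneg (U : Set Ω) : 0 ≤ ind U := fun ω => by
  by_cases h : ω ∈ U <;> simp [ind, h]

lemma ind_le_one (U : Set Ω) : ind U ≤ fun _ => 1 := fun ω => by
  by_cases h : ω ∈ U <;> simp [ind, h]

lemma ind_norm_le (U : Set Ω) (ω : Ω) : ‖ind U ω‖ ≤ 1 := by
  by_cases h : ω ∈ U <;> simp [ind, h]

lemma ind_int {U : Set Ω} (hU : MeasurableSet[mΩ] U) : Integrable (ind U) P :=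
  (integrable_const (1 : ℝ)).indicator hU

lemma ind_sm {U : Set Ω} {mU : MeasurableSpace Ω} (hU : MeasurableSet[mU] U) :
    StronglyMeasurable[mU] (ind U) :=
  (stronglyMeasurable_const (β := ℝ)).indicator hU

lemma fI_eq_ind (W : Ω → ℝ) (y : ℝ) : fI W y = ind {ω | y ≤ W ω} := rfl

lemma abs_condexp_le_one' (hm : m ≤ mΩ) {g : Ω → ℝ} (hgi : Integrable g P)
    (hgb : ∀ᵐ ω ∂P, ‖g ω‖ ≤ 1) : ∀ᵐ ω ∂P, ‖(P[g|m]) ω‖ ≤ 1 := by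
  have hup : P[g|m] ≤ᵐ[P] P[fun _ => (1:ℝ)|m] :=
    condExp_mono hgi (integrable_const 1) (hgb.mono fun ω h => le_trans (le_abs_self _) h)
  have hlow : P[fun _ => (-1:ℝ)|m] ≤ᵐ[P] P[g|m] :=
    condExp_mono (integrable_const (-1)) hgi (hgb.mono fun ω h => by
      simpa using (abs_le.1 h).1)
  rw [condExp_const hm] at hup
  rw [condExp_const hm] at hlow
  filter_upwards [hup, hlow] with ω h1 h2
  rw [Real.norm_eq_abs, abs_le]; exact ⟨h2, h1⟩

/-- π-system of intersections generating the sup of two σ-algebras. -/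
def interSet (m₁ m₂ : MeasurableSpace Ω) : Set (Set Ω) :=
  {s | ∃ s₁ s₂, MeasurableSet[m₁] s₁ ∧ MeasurableSet[m₂] s₂ ∧ s = s₁ ∩ s₂}

lemma isPiSystem_interSet (m₁ m₂ : MeasurableSpace Ω) : IsPiSystem (interSet m₁ m₂) := by
  rintro s ⟨s₁, s₂, h1, h2, rfl⟩ t ⟨t₁, t₂, g1, g2, rfl⟩ -
  exact ⟨s₁ ∩ t₁, s₂ ∩ t₂, h1.inter g1, h2.inter g2, by
    ext x; simp only [Set.mem_inter_iff]; tauto⟩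

lemma sup_eq_generateFrom_interSet (m₁ m₂ : MeasurableSpace Ω) :
    m₁ ⊔ m₂ = MeasurableSpace.generateFrom (interSet m₁ m₂) := by
  refine le_antisymm (sup_le ?_ ?_) (MeasurableSpace.generateFrom_le ?_)
  · intro s hs
    exact MeasurableSpace.measurableSet_generateFrom
      ⟨s, Set.univ, hs, MeasurableSet.univ, (Set.inter_univ s).symm⟩
  · intro s hs
    exact MeasurableSpace.measurableSet_generateFrom
      ⟨Set.univ, s, MeasurableSet.univ, hs, (Set.univ_inter s).symm⟩
  · rintro s ⟨s₁, s₂, h1, h2, rfl⟩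
    exact ((le_sup_left : m₁ ≤ m₁ ⊔ m₂) _ h1).inter ((le_sup_right : m₂ ≤ m₁ ⊔ m₂) _ h2)

lemma setIntegral_ext_of_inter (hC : mc ≤ mΩ) (hN : mn ≤ mΩ)
    {u v : Ω → ℝ} (hu : Integrable u P) (hv : Integrable v P)
    (htot : ∫ ω, u ω ∂P = ∫ ω, v ω ∂P)
    (hπ : ∀ S T, MeasurableSet[mc] S → MeasurableSet[mn] T →
      ∫ ω in S ∩ T, u ω ∂P = ∫ ω in S ∩ T, v ω ∂P) :
    ∀ W : Set Ω, MeasurableSet[mc ⊔ mn] W → ∫ ω in W, u ω ∂P = ∫ ω in W, v ω ∂P := by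
  have hsup : mc ⊔ mn ≤ mΩ := sup_le hC hN
  intro W hW
  refine MeasurableSpace.induction_on_inter (m := mc ⊔ mn)
    (C := fun W _ => ∫ ω in W, u ω ∂P = ∫ ω in W, v ω ∂P)
    (sup_eq_generateFrom_interSet mc mn) (isPiSystem_interSet mc mn) ?_ ?_ ?_ ?_ W hW
  · simp
  · rintro t ⟨s₁, s₂, h1, h2, rfl⟩
    exact hπ s₁ s₂ h1 h2
  · intro t ht hI
    have hta : MeasurableSet[mΩ] t := hsup _ ht
    have h1 := integral_add_compl hta hu
    have h2 := integral_add_compl hta hv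
    linarith
  · intro g hd hgm hI
    have hgma : ∀ i, MeasurableSet[mΩ] (g i) := fun i => hsup _ (hgm i)
    rw [integral_iUnion hgma hd hu.integrableOn, integral_iUnion hgma hd hv.integrableOn]
    exact tsum_congr hI

lemma mul_ind_eq_indicator (h : Ω → ℝ) (T : Set Ω) :
    ∀ ω, T.indicator h ω = h ω * ind T ω := fun ω => by
  by_cases hT : ω ∈ T <;> simp [ind, hT]

/-- FLIP: under conditional independence of `mi` and `mn` given `mc`, conditioning an
`mi`-measurable indicator on `mc ⊔ mn` is the same as conditioning on `mc`. -/
lemma flip_condexp [StandardBorelSpace Ω] (hC : mc ≤ mΩ) (hM : mi ≤ mΩ) (hN : mn ≤ mΩ)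
    (hCI : CondIndep mc mi mn hC P) {U : Set Ω} (hU : MeasurableSet[mi] U) :
    P[ind U | mc ⊔ mn] =ᵐ[P] P[ind U | mc] := by
  have hUa : MeasurableSet[mΩ] U := hM _ hU
  have hintU : Integrable (ind U) P := ind_int hUa
  have hprod := (condIndep_iff mc mi mn hC hM hN P).1 hCI
  have hcore : ∀ S T, MeasurableSet[mc] S → MeasurableSet[mn] T →
      ∫ ω in S ∩ T, ind U ω ∂P = ∫ ω in S ∩ T, (P[ind U|mc]) ω ∂P := by
    intro S T hS hT
    have hSa : MeasurableSet[mΩ] S := hC _ hS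
    have hTa : MeasurableSet[mΩ] T := hN _ hT
    have hintUT : Integrable (ind (U ∩ T)) P := ind_int (hUa.inter hTa)
    have hintT : Integrable (ind T) P := ind_int hTa
    have hmulint : Integrable (P[ind U|mc] * ind T) P :=
      Integrable.bdd_mul (c := 1) hintT
        (stronglyMeasurable_condExp.mono hC).aestronglyMeasurable
        (abs_condexp_le_one' hC hintU (Eventually.of_forall (ind_norm_le U)))
    calc ∫ ω in S ∩ T, ind U ω ∂P
        = ∫ ω in S, T.indicator (ind U) ω ∂P := (setIntegral_indicator hTa).symm
      _ = ∫ ω in S, ind (U ∩ T) ω ∂P := by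
          refine setIntegral_congr_ae hSa (Eventually.of_forall fun ω _ => ?_)
          by_cases h1 : ω ∈ T <;> by_cases h2 : ω ∈ U <;>
            simp [ind, h1, h2, Set.mem_inter_iff]
      _ = ∫ ω in S, (P[ind (U ∩ T)|mc]) ω ∂P := (setIntegral_condExp hC hintUT hS).symm
      _ = ∫ ω in S, ((P[ind U|mc]) * (P[ind T|mc])) ω ∂P := by
          refine setIntegral_congr_ae hSa ((hprod U T hU hT).mono fun ω e _ => e)
      _ = ∫ ω in S, (P[(P[ind U|mc]) * ind T|mc]) ω ∂P := by
          refine setIntegral_congr_ae hSa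
            (((condExp_mul_of_stronglyMeasurable_left stronglyMeasurable_condExp hmulint
              hintT).symm).mono fun ω e _ => e)
      _ = ∫ ω in S, ((P[ind U|mc]) * ind T) ω ∂P := setIntegral_condExp hC hmulint hS
      _ = ∫ ω in S, T.indicator (P[ind U|mc]) ω ∂P := by
          refine setIntegral_congr_ae hSa (Eventually.of_forall fun ω _ => ?_)
          exact (mul_ind_eq_indicator _ T ω).symm
      _ = ∫ ω in S ∩ T, (P[ind U|mc]) ω ∂P := setIntegral_indicator hTa
  have htot : ∫ ω, ind U ω ∂P = ∫ ω, (P[ind U|mc]) ω ∂P := (integral_condExp hC).symm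
  have hext := setIntegral_ext_of_inter hC hN hintU integrable_condExp htot hcore
  exact (ae_eq_condExp_of_forall_setIntegral_eq (sup_le hC hN) hintU
    (fun s _ _ => integrable_condExp.integrableOn)
    (fun s hs _ => (hext s hs).symm)
    (stronglyMeasurable_condExp.mono le_sup_left :
      StronglyMeasurable[mc ⊔ mn] (P[ind U|mc])).aestronglyMeasurable).symm

/-- tower through an intermediate σ-algebra. -/
lemma condexp_intermediate {mA' mI' mB' : MeasurableSpace Ω} {mΩ : MeasurableSpace Ω}
    {P : Measure Ω} [IsProbabilityMeasure P]
    (hA : mA' ≤ mI') (hI : mI' ≤ mB') (hB : mB' ≤ mΩ) {g : Ω → ℝ}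
    (h : P[g|mB'] =ᵐ[P] P[g|mA']) : P[g|mI'] =ᵐ[P] P[g|mA'] := by
  calc P[g|mI'] =ᵐ[P] P[P[g|mB']|mI'] := (condExp_condExp_of_le hI hB).symm
    _ =ᵐ[P] P[P[g|mA']|mI'] := condExp_congr_ae h
    _ =ᵐ[P] P[g|mA'] := by
        rw [condExp_of_stronglyMeasurable (hI.trans hB)
          (stronglyMeasurable_condExp.mono hA) integrable_condExp]

/-- pull-out/product rule when the conditional expectation of `g` is unchanged
between `mc` and the intermediate σ-algebra `mi`. -/
lemma condexp_mul_of_eq (hCI : mc ≤ mi) (hI : mi ≤ mΩ)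
    {f g : Ω → ℝ} (hfSM : StronglyMeasurable[mi] f) (hfb : ∀ ω, ‖f ω‖ ≤ 1)
    (hfi : Integrable f P) (hgi : Integrable g P) (hgb : ∀ᵐ ω ∂P, ‖g ω‖ ≤ 1)
    (h : P[g|mi] =ᵐ[P] P[g|mc]) :
    P[f * g|mc] =ᵐ[P] P[f|mc] * P[g|mc] := by
  have hCa : mc ≤ mΩ := hCI.trans hI
  have hint1 : Integrable (f * g) P :=
    Integrable.bdd_mul (c := 1) hgi (hfSM.mono hI).aestronglyMeasurable
      (Eventually.of_forall hfb)
  have hint2 : Integrable (f * P[g|mi]) P :=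
    Integrable.bdd_mul (c := 1) integrable_condExp (hfSM.mono hI).aestronglyMeasurable
      (Eventually.of_forall hfb)
  have hint3 : Integrable ((P[g|mc]) * f) P :=
    Integrable.bdd_mul (c := 1) hfi
      (stronglyMeasurable_condExp.mono hCa).aestronglyMeasurable
      (abs_condexp_le_one' hCa hgi hgb)
  calc P[f * g|mc] =ᵐ[P] P[P[f * g|mi]|mc] := (condExp_condExp_of_le hCI hI).symm
    _ =ᵐ[P] P[f * P[g|mi]|mc] :=
        condExp_congr_ae (condExp_mul_of_stronglyMeasurable_left hfSM hint1 hgi)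
    _ =ᵐ[P] P[(P[g|mc]) * f|mc] := by
        refine condExp_congr_ae (h.mono fun ω e => ?_)
        simp only [Pi.mul_apply, e, mul_comm]
    _ =ᵐ[P] (P[g|mc]) * P[f|mc] :=
        condExp_mul_of_stronglyMeasurable_left stronglyMeasurable_condExp hint3 hfi
    _ =ᵐ[P] P[f|mc] * P[g|mc] := by
        refine Eventually.of_forall fun ω => ?_
        simp only [Pi.mul_apply, mul_comm]

/-- Dichotomy: points of `ℝ` can be `L¹`-approximated from a full-measure set `D`. -/
lemma dich {α : Measure ℝ} [IsProbabilityMeasure α] {D : Set ℝ} (hD : α Dᶜ = 0)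
    {y : ℝ} (hy : α (Set.Ici y) ≠ 0) {ε : ℝ} (hε : 0 < ε) :
    ∃ d ∈ D, (α (Set.Ico (min d y) (max d y))).toReal < ε := by
  by_contra hcon
  push_neg at hcon
  set F : ℝ → ℝ := fun t => (α (Set.Ici t)).toReal with hF
  have hFanti : Antitone F := fun a b hab =>
    ENNReal.toReal_le_toReal (measure_ne_top _ _) (measure_ne_top _ _) |>.2
      (measure_mono (Set.Ici_subset_Ici.2 hab))
  have hFy : 0 < F y := ENNReal.toReal_pos hy (measure_ne_top _ _)
  have hIcoF : ∀ a b : ℝ, a ≤ b → (α (Set.Ico a b)).toReal = F a - F b := by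
    intro a b hab
    have : Set.Ico a b = Set.Ici a \ Set.Ici b := by
      ext x; simp only [Set.mem_Ico, Set.mem_diff, Set.mem_Ici, not_le]
    rw [this, measure_diff (Set.Ici_subset_Ici.2 hab) measurableSet_Ici.nullMeasurableSet
      (measure_ne_top _ _), ENNReal.toReal_sub_of_le
      (measure_mono (Set.Ici_subset_Ici.2 hab)) (measure_ne_top _ _)]
  have hcase1 : ∀ d ∈ D, d ≤ y → ε ≤ F d - F y := by
    intro d hd hdy
    have := hcon d hd
    rwa [min_eq_left hdy, max_eq_right hdy, hIcoF d y hdy] at this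
  have hcase2 : ∀ d ∈ D, y ≤ d → ε ≤ F y - F d := by
    intro d hd hdy
    have := hcon d hd
    rwa [min_eq_right hdy, max_eq_left hdy, hIcoF y d hdy] at this
  set γ : ℝ := F y - ε with hγ
  set K : Set ℝ := {x | γ < F x ∧ F x ≤ F y} with hK
  have hyK : y ∈ K := ⟨by rw [hγ]; linarith, le_rfl⟩
  have hDK : ∀ d ∈ D, d ∉ K := by
    intro d hd hdK
    rcases le_total d y with h | h
    · have h1 := hcase1 d hd h
      have h2 := hFanti h
      have h3 : F d ≤ F y := hdK.2
      linarith
    · have h1 := hcase2 d hd h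
      have h2 : γ < F d := hdK.1
      rw [hγ] at h2; linarith
  have hKnull : α K = 0 := by
    refine le_antisymm (le_trans (measure_mono ?_) hD.le) (zero_le)
    intro x hx
    exact fun hxD => hDK x hxD hx
  have hconv : ∀ x₁ x₂ x : ℝ, x₁ ∈ K → x₂ ∈ K → x₁ ≤ x → x ≤ x₂ → x ∈ K := by
    intro x₁ x₂ x h1 h2 ha hb
    exact ⟨lt_of_lt_of_le h2.1 (hFanti hb), le_trans (hFanti ha) h1.2⟩
  have hbdd : BddAbove K := by
    by_contra hb
    rw [not_bddAbove_iff] at hb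
    have : Set.Ici y ⊆ K := by
      intro x hx
      obtain ⟨k, hkK, hk⟩ := hb x
      exact hconv y k x hyK hkK hx hk.le
    exact hy (le_antisymm (le_trans (measure_mono this) hKnull.le) (zero_le))
  set v : ℝ := sSup K with hv
  have hyv : y ≤ v := le_csSup hbdd hyK
  have hIcoyv : α (Set.Ico y v) = 0 := by
    refine le_antisymm (le_trans (measure_mono ?_) hKnull.le) (zero_le)
    intro x hx
    obtain ⟨k, hkK, hk⟩ := exists_lt_of_lt_csSup ⟨y, hyK⟩ hx.2
    exact hconv y k x hyK hkK hx.1 hk.le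
  have hFle : ∀ x, v < x → F x ≤ γ := by
    intro x hx
    have hxK : x ∉ K := fun h => absurd (le_csSup hbdd h) (not_le.2 hx)
    have hxy : F x ≤ F y := hFanti (le_trans hyv hx.le)
    by_contra h
    exact hxK ⟨not_le.1 h, hxy⟩
  have hεv : ∀ n : ℕ, ε ≤ (α (Set.Ico v (v + 1 / ((n : ℝ) + 1)))).toReal := by
    intro n
    have hd : (0:ℝ) < 1 / ((n : ℝ) + 1) := by positivity
    set x := v + 1 / ((n : ℝ) + 1) with hx
    have hvx : v < x := by rw [hx]; linarith
    have h1 : ε ≤ F y - F x := by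
      have := hFle x hvx
      rw [hγ] at this; linarith
    have h2 : (α (Set.Ico y x)).toReal = F y - F x := hIcoF y x (le_trans hyv hvx.le)
    have h3 : α (Set.Ico y x) = α (Set.Ico y v) + α (Set.Ico v x) := by
      rw [← Set.Ico_union_Ico_eq_Ico hyv hvx.le]
      exact measure_union (Set.Ico_disjoint_Ico_same) measurableSet_Ico
    rw [h3, hIcoyv, zero_add] at h2
    linarith [h2.ge, h2.le, h1]
  have htend : Tendsto (fun n : ℕ => α (Set.Ico v (v + 1 / ((n : ℝ) + 1)))) atTop
      (nhds (α {v})) := by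
    have hInt : ⋂ n : ℕ, Set.Ico v (v + 1 / ((n : ℝ) + 1)) = {v} := by
      ext x
      simp only [Set.mem_iInter, Set.mem_Ico, Set.mem_singleton_iff]
      constructor
      · intro h
        have h1 : v ≤ x := (h 0).1
        rcases eq_or_lt_of_le h1 with h2 | h2
        · exact h2.symm
        · exfalso
          obtain ⟨n, hn⟩ := exists_nat_one_div_lt (sub_pos.2 h2)
          exact absurd (h n).2 (by push_neg; linarith)
      · rintro rfl
        refine fun n => ⟨le_rfl, ?_⟩
        have : (0:ℝ) < 1 / ((n : ℝ) + 1) := by positivity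
        linarith
    have := tendsto_measure_iInter_atTop
      (μ := α) (s := fun n : ℕ => Set.Ico v (v + 1 / ((n : ℝ) + 1)))
      (fun n => measurableSet_Ico.nullMeasurableSet)
      (fun a b hab => Set.Ico_subset_Ico le_rfl (by
        have : (1:ℝ) / ((b:ℝ)+1) ≤ 1 / ((a:ℝ)+1) := by
          apply one_div_le_one_div_of_le (by positivity)
          exact_mod_cast (by omega : a + 1 ≤ b + 1)
        linarith))
      ⟨0, measure_ne_top _ _⟩
    rwa [hInt] at this
  have hlim : ε ≤ (α {v}).toReal := by
    have htr : Tendsto (fun n : ℕ => (α (Set.Ico v (v + 1 / ((n : ℝ) + 1)))).toReal) atTop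
        (nhds ((α {v}).toReal)) :=
      (ENNReal.tendsto_toReal (measure_ne_top _ _)).comp htend
    exact ge_of_tendsto htr (Eventually.of_forall hεv)
  have hvD : v ∈ D := by
    by_contra hvD
    have : α {v} ≤ α Dᶜ := measure_mono (by simpa using hvD)
    rw [hD] at this
    simp only [nonpos_iff_eq_zero] at this
    rw [this] at hlim
    simp at hlim
    linarith
  rcases eq_or_lt_of_le hyv with h | h
  · have := hcon v hvD
    rw [← h] at this
    simp only [min_self, max_self, Set.Ico_self, measure_empty] at this
    simp at this
    linarith
  · have := hcon v hvD
    rw [min_eq_right h.le, max_eq_left h.le, hIcoyv] at this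
    simp at this
    linarith

section Upgrade

variable {W : Ω → ℝ}

lemma L1_fI_diff (hW : Measurable W) (d y : ℝ) :
    ∫ ω, |fI W y ω - fI W d ω| ∂P
      = ((P.map W) (Set.Ico (min d y) (max d y))).toReal := by
  have key : ∀ ω, |fI W y ω - fI W d ω|
      = (W ⁻¹' (Set.Ico (min d y) (max d y))).indicator (fun _ => (1:ℝ)) ω := by
    intro ω
    rcases le_total d y with h | h
    · rw [min_eq_left h, max_eq_right h]
      by_cases h2 : y ≤ W ω
      · have h1 : d ≤ W ω := le_trans h h2
        have hni : ω ∉ W ⁻¹' Set.Ico d y := fun hc => absurd (Set.mem_Ico.1 hc).2 (not_lt.2 h2)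
        rw [Set.indicator_of_notMem hni, fI_one h2,
          fI_one h1]
        simp
      · by_cases h1 : d ≤ W ω
        · have hmi : ω ∈ W ⁻¹' Set.Ico d y := Set.mem_Ico.2 ⟨h1, not_le.1 h2⟩
          rw [Set.indicator_of_mem hmi, fI_zero h2,
            fI_one h1]
          simp
        · have hni : ω ∉ W ⁻¹' Set.Ico d y := fun hc => absurd (Set.mem_Ico.1 hc).1 h1
          rw [Set.indicator_of_notMem hni, fI_zero h2,
            fI_zero h1]
          simp
    · rw [min_eq_right h, max_eq_left h]
      by_cases h1 : d ≤ W ω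
      · have h2 : y ≤ W ω := le_trans h h1
        have hni : ω ∉ W ⁻¹' Set.Ico y d := fun hc => absurd (Set.mem_Ico.1 hc).2 (not_lt.2 h1)
        rw [Set.indicator_of_notMem hni, fI_one h2,
          fI_one h1]
        simp
      · by_cases h2 : y ≤ W ω
        · have hmi : ω ∈ W ⁻¹' Set.Ico y d := Set.mem_Ico.2 ⟨h2, not_le.1 h1⟩
          rw [Set.indicator_of_mem hmi, fI_one h2,
            fI_zero h1]
          simp
        · have hni : ω ∉ W ⁻¹' Set.Ico y d := fun hc => absurd (Set.mem_Ico.1 hc).1 h2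
          rw [Set.indicator_of_notMem hni, fI_zero h2,
            fI_zero h1]
          simp
  rw [integral_congr_ae (Eventually.of_forall key),
    integral_indicator_const (1:ℝ) (hW measurableSet_Ico), smul_eq_mul, mul_one,
    Measure.map_apply hW measurableSet_Ico, measureReal_def]

lemma upgrade (hW : Measurable W) {D : Set ℝ} (hD : (P.map W) Dᶜ = 0)
    (hgood : ∀ d ∈ D, P[fI W d|m'] =ᵐ[P] P[fI W d|m]) (y : ℝ) :
    P[fI W y|m'] =ᵐ[P] P[fI W y|m] := by
  haveI : IsProbabilityMeasure (P.map W) := Measure.isProbabilityMeasure_map hW.aemeasurable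
  by_cases h0 : (P.map W) (Set.Ici y) = 0
  · have hP0 : P {ω | y ≤ W ω} = 0 := by
      rw [setOf_le_eq_preimage, ← Measure.map_apply hW measurableSet_Ici]; exact h0
    have hz : fI W y =ᵐ[P] 0 := by
      rw [Filter.EventuallyEq, ae_iff]
      refine measure_mono_null (fun ω h => ?_) hP0
      by_contra hmem
      exact h (by simp [fI, Set.indicator_of_notMem hmem])
    calc P[fI W y|m'] =ᵐ[P] P[(0 : Ω → ℝ)|m'] := condExp_congr_ae hz
      _ = 0 := condExp_zero
      _ = P[(0 : Ω → ℝ)|m] := condExp_zero.symm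
      _ =ᵐ[P] P[fI W y|m] := condExp_congr_ae hz.symm
  · set Δ : Ω → ℝ := fun ω => |(P[fI W y|m']) ω - (P[fI W y|m]) ω| with hΔ
    have hΔint : Integrable Δ P := (integrable_condExp.sub integrable_condExp).abs
    have hbound : ∀ ε : ℝ, 0 < ε → ∫ ω, Δ ω ∂P ≤ 2 * ε := by
      intro ε hε
      obtain ⟨d, hdD, hdlt⟩ := dich hD h0 hε
      have hfd_int := fI_int (P := P) hW d
      have hfy_int := fI_int (P := P) hW y
      have hdiff_int : Integrable (fun ω => fI W y ω - fI W d ω) P := hfy_int.sub hfd_int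
      set t1 : Ω → ℝ := fun ω => |(P[fI W y|m']) ω - (P[fI W d|m']) ω| with ht1
      set t2 : Ω → ℝ := fun ω => |(P[fI W d|m']) ω - (P[fI W d|m]) ω| with ht2
      set t3 : Ω → ℝ := fun ω => |(P[fI W d|m]) ω - (P[fI W y|m]) ω| with ht3
      have hint1 : Integrable t1 P := (integrable_condExp.sub integrable_condExp).abs
      have hint2 : Integrable t2 P := (integrable_condExp.sub integrable_condExp).abs
      have hint3 : Integrable t3 P := (integrable_condExp.sub integrable_condExp).abs
      have htri : ∀ ω, Δ ω ≤ t1 ω + t2 ω + t3 ω := by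
        intro ω
        have ha : Δ ω ≤ |(P[fI W y|m']) ω - (P[fI W d|m]) ω| + t3 ω :=
          abs_sub_le _ ((P[fI W d|m]) ω) _
        have hb : |(P[fI W y|m']) ω - (P[fI W d|m]) ω| ≤ t1 ω + t2 ω :=
          abs_sub_le _ ((P[fI W d|m']) ω) _
        linarith
      have hI2 : ∫ ω, t2 ω ∂P = 0 := by
        have hz2 : t2 =ᵐ[P] 0 := (hgood d hdD).mono fun ω e => by
          simp only [ht2, e, sub_self, abs_zero, Pi.zero_apply]
        rw [integral_congr_ae hz2]; simp
      have hI1 : ∫ ω, t1 ω ∂P ≤ ε := by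
        have hsub : (fun ω => (P[fI W y|m']) ω - (P[fI W d|m']) ω)
            =ᵐ[P] P[fun ω => fI W y ω - fI W d ω|m'] :=
          (condExp_sub hfy_int hfd_int m').symm
        calc ∫ ω, t1 ω ∂P = ∫ ω, |(P[fun ω => fI W y ω - fI W d ω|m']) ω| ∂P := by
              refine integral_congr_ae (hsub.mono fun ω e => ?_)
              exact congrArg abs e
          _ ≤ ∫ ω, |fI W y ω - fI W d ω| ∂P := integral_abs_condExp_le _
          _ ≤ ε := by rw [L1_fI_diff hW d y]; exact hdlt.le
      have hI3 : ∫ ω, t3 ω ∂P ≤ ε := by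
        have hsub : (fun ω => (P[fI W y|m]) ω - (P[fI W d|m]) ω)
            =ᵐ[P] P[fun ω => fI W y ω - fI W d ω|m] :=
          (condExp_sub hfy_int hfd_int m).symm
        calc ∫ ω, t3 ω ∂P = ∫ ω, |(P[fun ω => fI W y ω - fI W d ω|m]) ω| ∂P := by
              refine integral_congr_ae (hsub.mono fun ω e => ?_)
              exact (abs_sub_comm _ _).trans (congrArg abs e)
          _ ≤ ∫ ω, |fI W y ω - fI W d ω| ∂P := integral_abs_condExp_le _
          _ ≤ ε := by rw [L1_fI_diff hW d y]; exact hdlt.le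
      calc ∫ ω, Δ ω ∂P ≤ ∫ ω, (t1 ω + t2 ω + t3 ω) ∂P :=
            integral_mono hΔint ((hint1.add hint2).add hint3) htri
        _ ≤ 2 * ε := by
            have e12 : ∫ ω, (t1 ω + t2 ω) ∂P = ∫ ω, t1 ω ∂P + ∫ ω, t2 ω ∂P :=
              integral_add hint1 hint2
            have e123 : ∫ ω, (t1 ω + t2 ω + t3 ω) ∂P
                = ∫ ω, (t1 ω + t2 ω) ∂P + ∫ ω, t3 ω ∂P :=
              integral_add (hint1.add hint2) hint3
            rw [e123, e12, hI2]
            linarith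
    have hnn : 0 ≤ ∫ ω, Δ ω ∂P := integral_nonneg fun ω => abs_nonneg _
    have hz : ∫ ω, Δ ω ∂P = 0 := by
      by_contra hne
      have hpos : 0 < ∫ ω, Δ ω ∂P := lt_of_le_of_ne hnn (Ne.symm hne)
      have := hbound ((∫ ω, Δ ω ∂P) / 4) (by linarith)
      linarith
    have := (integral_eq_zero_iff_of_nonneg (fun ω => abs_nonneg _) hΔint).1 hz
    filter_upwards [this] with ω hω
    have : Δ ω = 0 := hω
    rw [hΔ] at this
    exact sub_eq_zero.1 (abs_eq_zero.1 this)

end Upgrade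

lemma ind_inter (s t : Set Ω) : ind (s ∩ t) = ind s * ind t := by
  funext ω
  by_cases h1 : ω ∈ s <;> by_cases h2 : ω ∈ t <;>
    simp [ind, Set.indicator_apply, Set.mem_inter_iff, h1, h2]

/-- Forward direction key lemma. -/
lemma forward_key [StandardBorelSpace Ω]
    (hA : mA ≤ mΩ) (hYle : mY ≤ mΩ) (hZle : mZ ≤ mΩ)
    (hCI : CondIndep mA mY mZ hA P)
    (hAp : mA ≤ mp) (hple : mp ≤ mA ⊔ mY)
    (hUY : mU ≤ mY) {U : Set Ω} (hU : MeasurableSet[mU] U) :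
    P[ind U | mp ⊔ mZ] =ᵐ[P] P[ind U | mp] := by
  have hYsup : mA ⊔ mY ≤ mΩ := sup_le hA hYle
  have hpΩ : mp ≤ mΩ := hple.trans hYsup
  have hUa : mU ≤ mΩ := hUY.trans hYle
  have step1 : ∀ (mq : MeasurableSpace Ω), mA ≤ mq → mq ≤ mA ⊔ mY →
      ∀ T : Set Ω, MeasurableSet[mZ] T → P[ind T | mq] =ᵐ[P] P[ind T | mA] := by
    intro mq hAq hqle T hT
    have hflip : P[ind T | mA ⊔ mY] =ᵐ[P] P[ind T | mA] :=
      flip_condexp hA hZle hYle hCI.symm hT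
    exact condexp_intermediate hAq hqle hYsup hflip
  have step2 : CondIndep mp mU mZ hpΩ P := by
    rw [condIndep_iff mp mU mZ hpΩ hUa hZle P]
    intro t1 t2 ht1 ht2
    have hBig : mp ⊔ mU ≤ mA ⊔ mY := sup_le hple (le_trans hUY le_sup_right)
    have hg : P[ind t2|mp ⊔ mU] =ᵐ[P] P[ind t2|mp] :=
      (step1 (mp ⊔ mU) (hAp.trans le_sup_left) hBig t2 ht2).trans
        (step1 mp hAp hple t2 ht2).symm
    have hprod := condexp_mul_of_eq (mc := mp) (mi := mp ⊔ mU) le_sup_left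
      (hBig.trans hYsup) (ind_sm ((le_sup_right : mU ≤ mp ⊔ mU) _ ht1))
      (ind_norm_le t1) (ind_int (hUa _ ht1)) (ind_int (hZle _ ht2))
      (Eventually.of_forall (ind_norm_le t2)) hg
    show P[ind (t1 ∩ t2)|mp] =ᵐ[P] P[ind t1|mp] * P[ind t2|mp]
    rw [ind_inter]
    exact hprod
  exact flip_condexp hpΩ hUa hZle step2 hU

section ChainY

variable {q : ℕ} {Y : Fin q → Ω → ℝ}

/-- the σ-algebra of the first `n` response variables. -/
def sigmaPastN (Y : Fin q → Ω → ℝ) (n : ℕ) : MeasurableSpace Ω :=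
  ⨆ j : Fin q, ⨆ _ : (j : ℕ) < n, MeasurableSpace.comap (Y j) inferInstance

lemma sigmaPast_eq_N (i : Fin q) : sigmaPast Y i = sigmaPastN Y (i : ℕ) := rfl

lemma sigmaPastN_zero : sigmaPastN Y 0 = ⊥ :=
  le_antisymm (iSup_le fun j => iSup_le fun hj => (Nat.not_lt_zero _ hj).elim) bot_le

lemma sigmaPastN_le (hY : ∀ i, Measurable (Y i)) (n : ℕ) : sigmaPastN Y n ≤ mΩ :=
  iSup_le fun j => iSup_le fun _ => (hY j).comap_le

lemma sigmaPastN_succ (n : ℕ) (hn : n < q) :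
    sigmaPastN Y (n + 1)
      = sigmaPastN Y n ⊔ MeasurableSpace.comap (Y ⟨n, hn⟩) inferInstance := by
  refine le_antisymm (iSup_le fun j => iSup_le fun hj => ?_) (sup_le ?_ ?_)
  · rcases Nat.lt_succ_iff_lt_or_eq.1 hj with h | h
    · exact le_trans
        (le_iSup₂ (f := fun (j : Fin q) (_ : (j : ℕ) < n) =>
          MeasurableSpace.comap (Y j) inferInstance) j h) le_sup_left
    · have hjk : j = ⟨n, hn⟩ := Fin.ext h
      rw [hjk]
      exact le_sup_right
  · exact iSup_le fun j => iSup_le fun hj =>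
      le_iSup₂ (f := fun (j : Fin q) (_ : (j : ℕ) < n + 1) =>
        MeasurableSpace.comap (Y j) inferInstance) j (Nat.lt_succ_of_lt hj)
  · exact le_iSup₂ (f := fun (j : Fin q) (_ : (j : ℕ) < n + 1) =>
      MeasurableSpace.comap (Y j) inferInstance) (⟨n, hn⟩ : Fin q) (Nat.lt_succ_self n)

lemma sigmaPastN_top : sigmaPastN Y q
    = ⨆ j : Fin q, MeasurableSpace.comap (Y j) inferInstance :=
  le_antisymm (iSup_le fun j => iSup_le fun _ => le_iSup
      (fun j => MeasurableSpace.comap (Y j) inferInstance) j)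
    (iSup_le fun j => le_iSup₂ (f := fun (j : Fin q) (_ : (j : ℕ) < q) =>
      MeasurableSpace.comap (Y j) inferInstance) j j.isLt)

lemma comap_vec_eq :
    MeasurableSpace.comap (fun ω => fun i => Y i ω) (inferInstance : MeasurableSpace (Fin q → ℝ))
      = ⨆ j : Fin q, MeasurableSpace.comap (Y j) inferInstance := by
  have hpi : (inferInstance : MeasurableSpace (Fin q → ℝ))
      = ⨆ i : Fin q, MeasurableSpace.comap (fun g : Fin q → ℝ => g i) inferInstance := rfl
  rw [hpi, MeasurableSpace.comap_iSup]
  exact iSup_congr fun i => by rw [MeasurableSpace.comap_comp]; rfl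

lemma comap_real_eq_gen (W : Ω → ℝ) :
    MeasurableSpace.comap W (inferInstance : MeasurableSpace ℝ)
      = MeasurableSpace.generateFrom {s : Set Ω | ∃ y : ℝ, s = {ω | y ≤ W ω}} := by
  calc MeasurableSpace.comap W (inferInstance : MeasurableSpace ℝ)
      = MeasurableSpace.comap W (MeasurableSpace.generateFrom (Set.range Set.Ici)) := by
        rw [show (inferInstance : MeasurableSpace ℝ) = borel ℝ from rfl,
          borel_eq_generateFrom_Ici ℝ]
    _ = MeasurableSpace.generateFrom (Set.preimage W '' Set.range Set.Ici) :=
        MeasurableSpace.comap_generateFrom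
    _ = MeasurableSpace.generateFrom {s : Set Ω | ∃ y : ℝ, s = {ω | y ≤ W ω}} := by
        congr 1
        ext s
        constructor
        · rintro ⟨t, ⟨y, rfl⟩, rfl⟩
          exact ⟨y, rfl⟩
        · rintro ⟨y, rfl⟩
          exact ⟨Set.Ici y, ⟨y, rfl⟩, rfl⟩

lemma converse_chain [StandardBorelSpace Ω]
    (hA : mA ≤ mΩ) (hZle : mZ ≤ mΩ) (hY : ∀ i, Measurable (Y i))
    (hyp : ∀ (i : Fin q) (y : ℝ),
      P[fI (Y i) y | (mA ⊔ sigmaPastN Y (i : ℕ)) ⊔ mZ]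
        =ᵐ[P] P[fI (Y i) y | mA ⊔ sigmaPastN Y (i : ℕ)]) :
    ∀ n, n ≤ q → ∀ T : Set Ω, MeasurableSet[mZ] T →
      P[ind T | mA ⊔ sigmaPastN Y n] =ᵐ[P] P[ind T | mA] := by
  intro n
  induction n with
  | zero => intro _ T hT; rw [sigmaPastN_zero, sup_bot_eq]
  | succ n ih =>
    intro hn T hT
    have hn' : n < q := Nat.lt_of_succ_le hn
    set k : Fin q := ⟨n, hn'⟩ with hk
    have hC'le : mA ⊔ sigmaPastN Y n ≤ mΩ := sup_le hA (sigmaPastN_le hY n)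
    have hkY : MeasurableSpace.comap (Y k) inferInstance ≤ mΩ := (hY k).comap_le
    have hypk : ∀ y : ℝ, P[fI (Y k) y | (mA ⊔ sigmaPastN Y n) ⊔ mZ]
        =ᵐ[P] P[fI (Y k) y | mA ⊔ sigmaPastN Y n] := fun y => hyp k y
    have stepa : CondIndep (mA ⊔ sigmaPastN Y n)
        (MeasurableSpace.comap (Y k) inferInstance) mZ hC'le P := by
      refine CondIndepSets.condIndep (p1 := {s : Set Ω | ∃ y : ℝ, s = {ω | y ≤ Y k ω}})
        (p2 := {s : Set Ω | MeasurableSet[mZ] s}) hkY hZle ?_ ?_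
        (comap_real_eq_gen (Y k)) (@MeasurableSpace.generateFrom_measurableSet Ω mZ).symm ?_
      · rintro s ⟨y1, rfl⟩ t ⟨y2, rfl⟩ -
        refine ⟨max y1 y2, ?_⟩
        ext ω
        simp only [Set.mem_inter_iff, Set.mem_setOf_eq, max_le_iff]
      · exact fun s hs t ht _ => hs.inter ht
      · rw [condIndepSets_iff _ hC'le _ _ ?_ ?_ P]
        · rintro t1 t2 ⟨y1, rfl⟩ ht2
          have hprod := condexp_mul_of_eq (mc := mA ⊔ sigmaPastN Y n)
            (mi := (mA ⊔ sigmaPastN Y n) ⊔ mZ) le_sup_left (sup_le hC'le hZle)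
            (ind_sm ((le_sup_right : mZ ≤ (mA ⊔ sigmaPastN Y n) ⊔ mZ) _ ht2))
            (ind_norm_le t2) (ind_int (hZle _ ht2)) (fI_int (hY k) y1)
            (Eventually.of_forall fun ω => by
              rw [fI_eq_ind]; exact ind_norm_le _ ω) (hypk y1)
          show P[ind ({ω | y1 ≤ Y k ω} ∩ t2)|mA ⊔ sigmaPastN Y n]
            =ᵐ[P] P[ind {ω | y1 ≤ Y k ω}|mA ⊔ sigmaPastN Y n]
              * P[ind t2|mA ⊔ sigmaPastN Y n]
          rw [ind_inter, mul_comm]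
          refine hprod.trans ?_
          rw [mul_comm]
          rfl
        · rintro s ⟨y1, rfl⟩
          exact measurableSet_fI (hY k) y1
        · exact fun s hs => hZle _ hs
    have stepb : P[ind T | (mA ⊔ sigmaPastN Y n)
          ⊔ MeasurableSpace.comap (Y k) inferInstance]
        =ᵐ[P] P[ind T | mA ⊔ sigmaPastN Y n] :=
      flip_condexp hC'le hZle hkY stepa.symm hT
    have heq : mA ⊔ sigmaPastN Y (n + 1)
        = (mA ⊔ sigmaPastN Y n) ⊔ MeasurableSpace.comap (Y k) inferInstance := by
      rw [sup_assoc, sigmaPastN_succ n hn']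
    rw [heq]
    exact stepb.trans (ih hn'.le T hT)

lemma converse_final [StandardBorelSpace Ω]
    (hA : mA ≤ mΩ) (hZle : mZ ≤ mΩ) (hY : ∀ i, Measurable (Y i))
    (hyp : ∀ (i : Fin q) (y : ℝ),
      P[fI (Y i) y | (mA ⊔ sigmaPastN Y (i : ℕ)) ⊔ mZ]
        =ᵐ[P] P[fI (Y i) y | mA ⊔ sigmaPastN Y (i : ℕ)]) :
    CondIndep mA (MeasurableSpace.comap (fun ω => fun i => Y i ω)
      (inferInstance : MeasurableSpace (Fin q → ℝ))) mZ hA P := by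
  have hQ := converse_chain hA hZle hY hyp q le_rfl
  have hVeq := comap_vec_eq (Y := Y)
  have hVle_full : MeasurableSpace.comap (fun ω => fun i => Y i ω)
      (inferInstance : MeasurableSpace (Fin q → ℝ)) ≤ mA ⊔ sigmaPastN Y q := by
    rw [hVeq, ← sigmaPastN_top]
    exact le_sup_right
  have hfull_le : mA ⊔ sigmaPastN Y q ≤ mΩ := sup_le hA (sigmaPastN_le hY q)
  have hVle : MeasurableSpace.comap (fun ω => fun i => Y i ω)
      (inferInstance : MeasurableSpace (Fin q → ℝ)) ≤ mΩ := hVle_full.trans hfull_le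
  rw [condIndep_iff mA _ mZ hA hVle hZle P]
  intro t1 t2 ht1 ht2
  have hprod := condexp_mul_of_eq (mc := mA) (mi := mA ⊔ sigmaPastN Y q) le_sup_left
    hfull_le (ind_sm (hVle_full _ ht1)) (ind_norm_le t1) (ind_int (hVle _ ht1))
    (ind_int (hZle _ ht2)) (Eventually.of_forall (ind_norm_le t2)) (hQ t2 ht2)
  show P[ind (t1 ∩ t2)|mA] =ᵐ[P] P[ind t1|mA] * P[ind t2|mA]
  rw [ind_inter]
  exact hprod

lemma sigmaPast_perm_le_vec (σ : Equiv.Perm (Fin q)) (i : Fin q) :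
    sigmaPast (fun j => Y (σ j)) i ≤ MeasurableSpace.comap (fun ω => fun i => Y i ω)
      (inferInstance : MeasurableSpace (Fin q → ℝ)) := by
  rw [comap_vec_eq]
  exact iSup_le fun j => iSup_le fun _ =>
    le_iSup (fun j => MeasurableSpace.comap (Y j) inferInstance) (σ j)

lemma comap_coord_le_vec (i : Fin q) :
    MeasurableSpace.comap (Y i) inferInstance
      ≤ MeasurableSpace.comap (fun ω => fun i => Y i ω)
        (inferInstance : MeasurableSpace (Fin q → ℝ)) := by
  rw [comap_vec_eq]
  exact le_iSup (fun j => MeasurableSpace.comap (Y j) inferInstance) i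

lemma forward_final [StandardBorelSpace Ω]
    (hA : mA ≤ mΩ) (hZle : mZ ≤ mΩ) (hY : ∀ i, Measurable (Y i))
    (hCI : CondIndep mA (MeasurableSpace.comap (fun ω => fun i => Y i ω)
      (inferInstance : MeasurableSpace (Fin q → ℝ))) mZ hA P)
    (σ : Equiv.Perm (Fin q)) (i : Fin q) (y : ℝ) :
    P[fI (Y (σ i)) y | (mA ⊔ sigmaPast (fun j => Y (σ j)) i) ⊔ mZ]
      =ᵐ[P] P[fI (Y (σ i)) y | mA ⊔ sigmaPast (fun j => Y (σ j)) i] := by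
  have hYvec : Measurable (fun ω => fun i => Y i ω) :=
    measurable_pi_lambda _ fun i => hY i
  have hYle : MeasurableSpace.comap (fun ω => fun i => Y i ω)
      (inferInstance : MeasurableSpace (Fin q → ℝ)) ≤ mΩ := hYvec.comap_le
  exact forward_key hA hYle hZle hCI le_sup_left
    (sup_le le_sup_left ((sigmaPast_perm_le_vec σ i).trans le_sup_right))
    ((comap_coord_le_vec (σ i)).trans hYle |> fun _ => (comap_coord_le_vec (σ i)))
    (measurableSet_fI_comap (Y (σ i)) y)

end ChainY

end PartII

end AFproof

open AFproof MeasureTheory ProbabilityTheory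

theorem Tbar_information_gain_and_conditional_independence
    {Ω : Type*} [MeasurableSpace Ω] [StandardBorelSpace Ω] [Nonempty Ω]
    (P : Measure Ω) [IsProbabilityMeasure P]
    {p q r : ℕ} (X : Ω → (Fin p → ℝ)) (Z : Ω → (Fin r → ℝ)) (Y : Fin q → Ω → ℝ)
    (hX : Measurable X) (hZ : Measurable Z) (hY : ∀ i, Measurable (Y i))
    (hnd : ∀ i, Nondegenerate P (Y i)) :
    Tbar P Y X ≤ Tbar P Y (fun ω => (X ω, Z ω)) ∧
    (Tbar P Y X = Tbar P Y (fun ω => (X ω, Z ω)) ↔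
      CondIndepFun (MeasurableSpace.comap X inferInstance) hX.comap_le
        (fun ω => fun i => Y i ω) Z P) := by
  classical
  have hXZ : Measurable (fun ω => (X ω, Z ω)) := hX.prodMk hZ
  have hcle : MeasurableSpace.comap X inferInstance
      ≤ MeasurableSpace.comap (fun ω => (X ω, Z ω)) inferInstance := by
    have h1 : MeasurableSpace.comap X inferInstance
        = MeasurableSpace.comap (fun ω => (X ω, Z ω))
          (MeasurableSpace.comap Prod.fst inferInstance) := by
      rw [MeasurableSpace.comap_comp]; rfl
    rw [h1]
    exact MeasurableSpace.comap_mono measurable_fst.comap_le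
  have hpair : MeasurableSpace.comap (fun ω => (X ω, Z ω)) inferInstance
      = MeasurableSpace.comap X inferInstance ⊔ MeasurableSpace.comap Z inferInstance := by
    have h2 : (inferInstance : MeasurableSpace ((Fin p → ℝ) × (Fin r → ℝ)))
        = MeasurableSpace.comap Prod.fst inferInstance
          ⊔ MeasurableSpace.comap Prod.snd inferInstance := rfl
    rw [h2, MeasurableSpace.comap_sup, MeasurableSpace.comap_comp,
      MeasurableSpace.comap_comp]
    rfl
  rcases Nat.eq_zero_or_pos q with hq0 | hq
  · subst hq0
    have e1 : Tbar P Y X = 1 := by simp [Tbar, T]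
    have e2 : Tbar P Y (fun ω => (X ω, Z ω)) = 1 := by simp [Tbar, T]
    refine ⟨by rw [e1, e2], ?_⟩
    constructor
    · intro _
      rw [ProbabilityTheory.condIndepFun_iff_condIndep]
      have hbot : MeasurableSpace.comap (fun ω => fun i : Fin 0 => Y i ω)
          (inferInstance : MeasurableSpace (Fin 0 → ℝ)) = ⊥ := by
        rw [AFproof.comap_vec_eq]
        exact le_antisymm (iSup_le fun j => j.elim0) bot_le
      rw [hbot]
      exact ProbabilityTheory.condIndep_bot_left _
    · intro _
      rw [e1, e2]
  · obtain ⟨hle, hiff⟩ := AFproof.Tbar_le_and_iff (P := P)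
      (X := X) (X' := fun ω => (X ω, Z ω)) hX hXZ hcle hY hnd hq
    refine ⟨hle, hiff.trans ?_⟩
    constructor
    · intro h
      rw [ProbabilityTheory.condIndepFun_iff_condIndep]
      refine AFproof.converse_final hX.comap_le hZ.comap_le hY ?_
      intro i y
      have h1 : ∀ᵐ y' ∂(P.map (Y i)),
          P[AFproof.fI (Y i) y' | MeasurableSpace.comap (fun ω => (X ω, Z ω)) inferInstance
            ⊔ sigmaPast Y i]
          =ᵐ[P] P[AFproof.fI (Y i) y' | MeasurableSpace.comap X inferInstance
            ⊔ sigmaPast Y i] := h 1 i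
      rw [hpair] at h1
      have h2 : ∀ᵐ y' ∂(P.map (Y i)),
          P[AFproof.fI (Y i) y' | (MeasurableSpace.comap X inferInstance ⊔ sigmaPast Y i)
            ⊔ MeasurableSpace.comap Z inferInstance]
          =ᵐ[P] P[AFproof.fI (Y i) y' | MeasurableSpace.comap X inferInstance
            ⊔ sigmaPast Y i] := by
        rw [show (MeasurableSpace.comap X inferInstance ⊔ sigmaPast Y i)
              ⊔ MeasurableSpace.comap Z inferInstance
            = (MeasurableSpace.comap X inferInstance ⊔ MeasurableSpace.comap Z inferInstance)
              ⊔ sigmaPast Y i from sup_right_comm _ _ _]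
        exact h1
      have hD : (P.map (Y i)) ({y' : ℝ |
          P[AFproof.fI (Y i) y' | (MeasurableSpace.comap X inferInstance ⊔ sigmaPast Y i)
            ⊔ MeasurableSpace.comap Z inferInstance]
          =ᵐ[P] P[AFproof.fI (Y i) y' | MeasurableSpace.comap X inferInstance
            ⊔ sigmaPast Y i]}ᶜ) = 0 := by
        rw [Set.compl_setOf]
        exact ae_iff.1 h2
      exact AFproof.upgrade (hY i) hD (fun d hd => hd) y
    · intro h σ i
      rw [ProbabilityTheory.condIndepFun_iff_condIndep] at h
      refine Filter.Eventually.of_forall fun y => ?_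
      have hfwd := AFproof.forward_final hX.comap_le hZ.comap_le hY h σ i y
      rw [hpair, show (MeasurableSpace.comap X inferInstance
            ⊔ MeasurableSpace.comap Z inferInstance) ⊔ sigmaPast (fun j => Y (σ j)) i
          = (MeasurableSpace.comap X inferInstance ⊔ sigmaPast (fun j => Y (σ j)) i)
            ⊔ MeasurableSpace.comap Z inferInstance from sup_right_comm _ _ _]
      exact hfwd
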